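/- arXiv:2011.13715 — 10 statements merged into one kernel-verified Lean document; each statement's English description precedes it below -/
import Mathlib

section
/- For integers n1 ≥ n2 ≥ n3 ≥ 1, there exists a subgraph G of K_{n1,n2,n3} with exactly n1·n2 + 2·n3 edges that contains no multipartite 4-cycle; for example, the graph consisting of all edges between V1 and V2 together with two matchings of size n3, one joining each vertex of V3 to a distinct vertex of V1 and one joining each vertex of V3 to a distinct vertex of V2. -/
/-- The part (in `Fin 3`) of a vertex of the complete 3-partite graph. -/
def triPart {n1 n2 n3 : ℕ} : Fin n1 ⊕ Fin n2 ⊕ Fin n3 → Fin 3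
  | Sum.inl _ => 0
  | Sum.inr (Sum.inl _) => 1
  | Sum.inr (Sum.inr _) => 2

/-- The complete 3-partite graph `K_{n1,n2,n3}`. -/
def triK (n1 n2 n3 : ℕ) : SimpleGraph (Fin n1 ⊕ Fin n2 ⊕ Fin n3) where
  Adj u v := triPart u ≠ triPart v
  symm := ⟨fun _ _ h => Ne.symm h⟩
  loopless := ⟨fun _ h => h rfl⟩

/-- `G` (a graph with partition function `p` into three parts) contains a multipartite
4-cycle: a 4-cycle whose vertex set meets all three parts. -/
def HasC4Multi {V : Type*} (G : SimpleGraph V) (p : V → Fin 3) : Prop :=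
  ∃ a b c d : V,
    a ≠ b ∧ a ≠ c ∧ a ≠ d ∧ b ≠ c ∧ b ≠ d ∧ c ≠ d ∧
    G.Adj a b ∧ G.Adj b c ∧ G.Adj c d ∧ G.Adj d a ∧
    (∀ i : Fin 3, ∃ v ∈ ({a, b, c, d} : Set V), p v = i)

/-- An edge-coloring `c` of `G` admits a rainbow multipartite 4-cycle. -/
def HasRainbowC4Multi {V : Type*} (G : SimpleGraph V) (p : V → Fin 3)
    (c : Sym2 V → ℕ) : Prop :=
  ∃ a b d e : V,
    a ≠ b ∧ a ≠ d ∧ a ≠ e ∧ b ≠ d ∧ b ≠ e ∧ d ≠ e ∧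
    G.Adj a b ∧ G.Adj b d ∧ G.Adj d e ∧ G.Adj e a ∧
    (∀ i : Fin 3, ∃ v ∈ ({a, b, d, e} : Set V), p v = i) ∧
    List.Pairwise (· ≠ ·) [c s(a, b), c s(b, d), c s(d, e), c s(e, a)]

private def myAdj {n1 n2 n3 : ℕ} : (Fin n1 ⊕ Fin n2 ⊕ Fin n3) → (Fin n1 ⊕ Fin n2 ⊕ Fin n3) → Prop
  | Sum.inl _, Sum.inr (Sum.inl _) => True
  | Sum.inr (Sum.inl _), Sum.inl _ => True
  | Sum.inl i, Sum.inr (Sum.inr k) => (i : ℕ) = (k : ℕ)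
  | Sum.inr (Sum.inr k), Sum.inl i => (i : ℕ) = (k : ℕ)
  | Sum.inr (Sum.inl j), Sum.inr (Sum.inr k) => (j : ℕ) = (k : ℕ)
  | Sum.inr (Sum.inr k), Sum.inr (Sum.inl j) => (j : ℕ) = (k : ℕ)
  | _, _ => False

private def myG (n1 n2 n3 : ℕ) : SimpleGraph (Fin n1 ⊕ Fin n2 ⊕ Fin n3) where
  Adj := myAdj
  symm := ⟨by rintro (i|j|k) (i'|j'|k') h <;> simp_all [myAdj]⟩
  loopless := ⟨by rintro (i|j|k) h <;> simp_all [myAdj]⟩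

private def E1 (n1 n2 n3 : ℕ) : Set (Sym2 (Fin n1 ⊕ Fin n2 ⊕ Fin n3)) :=
  (fun p : Fin n1 × Fin n2 => s(Sum.inl p.1, Sum.inr (Sum.inl p.2))) '' Set.univ
private def E2 (n1 n2 n3 : ℕ) (h13 : n3 ≤ n1) : Set (Sym2 (Fin n1 ⊕ Fin n2 ⊕ Fin n3)) :=
  (fun k : Fin n3 => s(Sum.inl (Fin.castLE h13 k), Sum.inr (Sum.inr k))) '' Set.univ
private def E3 (n1 n2 n3 : ℕ) (h23 : n3 ≤ n2) : Set (Sym2 (Fin n1 ⊕ Fin n2 ⊕ Fin n3)) :=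
  (fun k : Fin n3 => s(Sum.inr (Sum.inl (Fin.castLE h23 k)), Sum.inr (Sum.inr k))) '' Set.univ

private lemma myG_le (n1 n2 n3 : ℕ) : myG n1 n2 n3 ≤ triK n1 n2 n3 := by
  rintro (i|j|k) (i'|j'|k') h <;> simp_all [myG, myAdj, triK, triPart]

private lemma myG_noC4 (n1 n2 n3 : ℕ) : ¬ HasC4Multi (myG n1 n2 n3) triPart := by
  rintro ⟨a, b, c, d, hab, hac, had, hbc, hbd, hcd, e1, e2, e3, e4, hmeet⟩
  obtain ⟨v, hv, hv2⟩ := hmeet 2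
  simp only [Set.mem_insert_iff, Set.mem_singleton_iff] at hv
  rcases v with iv|jv|kv <;>
  rcases a with i|j|k <;> rcases b with i'|j'|k' <;> rcases c with i''|j''|k'' <;>
    rcases d with i'''|j'''|k''' <;>
    simp_all [myG, myAdj, triPart, Fin.ext_iff]

private lemma myG_edgeSet (n1 n2 n3 : ℕ) (h13 : n3 ≤ n1) (h23 : n3 ≤ n2) :
    (myG n1 n2 n3).edgeSet = E1 n1 n2 n3 ∪ E2 n1 n2 n3 h13 ∪ E3 n1 n2 n3 h23 := by
  ext e
  induction e using Sym2.ind with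
  | _ u v =>
    simp only [SimpleGraph.mem_edgeSet, E1, E2, E3, Set.image_univ, Set.mem_union,
      Set.mem_range, Prod.exists, Sym2.eq, Sym2.rel_iff', Prod.mk.injEq, Prod.swap_prod_mk]
    rcases u with i|j|k <;> rcases v with i'|j'|k' <;>
      simp_all [myG, myAdj, Fin.ext_iff] <;>
      exact ⟨fun h => ⟨_, h.symm, rfl⟩, fun ⟨y, h1, h2⟩ => h1 ▸ h2⟩

private lemma myG_count (n1 n2 n3 : ℕ) (h13 : n3 ≤ n1) (h23 : n3 ≤ n2) :
    (E1 n1 n2 n3 ∪ E2 n1 n2 n3 h13 ∪ E3 n1 n2 n3 h23).ncard = n1 * n2 + 2 * n3 := by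
  have c1 : (E1 n1 n2 n3).ncard = n1 * n2 := by
    rw [E1, Set.ncard_image_of_injective _
      (by intro p q h; simpa [Prod.ext_iff, Sym2.eq, Sym2.rel_iff'] using h), Set.ncard_univ]
    simp [Nat.card_eq_fintype_card]
  have c2 : (E2 n1 n2 n3 h13).ncard = n3 := by
    rw [E2, Set.ncard_image_of_injective _
      (by intro p q h; simpa [Fin.ext_iff, Sym2.eq, Sym2.rel_iff'] using h), Set.ncard_univ]
    simp [Nat.card_eq_fintype_card]
  have c3 : (E3 n1 n2 n3 h23).ncard = n3 := by
    rw [E3, Set.ncard_image_of_injective _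
      (by intro p q h; simpa [Fin.ext_iff, Sym2.eq, Sym2.rel_iff'] using h), Set.ncard_univ]
    simp [Nat.card_eq_fintype_card]
  have d12 : Disjoint (E1 n1 n2 n3) (E2 n1 n2 n3 h13) := by
    rw [Set.disjoint_left]
    rintro e ⟨p, -, rfl⟩ ⟨k, -, h⟩
    simp [Sym2.eq, Sym2.rel_iff'] at h
  have d13 : Disjoint (E1 n1 n2 n3) (E3 n1 n2 n3 h23) := by
    rw [Set.disjoint_left]
    rintro e ⟨p, -, rfl⟩ ⟨k, -, h⟩
    simp [Sym2.eq, Sym2.rel_iff'] at h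
  have d23 : Disjoint (E2 n1 n2 n3 h13) (E3 n1 n2 n3 h23) := by
    rw [Set.disjoint_left]
    rintro e ⟨p, -, rfl⟩ ⟨k, -, h⟩
    simp [Sym2.eq, Sym2.rel_iff'] at h
  rw [Set.ncard_union_eq (by simp [Set.disjoint_union_left, d13, d23])
      ((Set.toFinite _).union (Set.toFinite _)) (Set.toFinite _),
    Set.ncard_union_eq d12 (Set.toFinite _) (Set.toFinite _), c1, c2, c3]
  ring

/-- there is a `C4^multi`-free subgraph of `K_{n1,n2,n3}` with exactly
`n1*n2 + 2*n3` edges. -/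
theorem turan_C4multi_lower (n1 n2 n3 : ℕ) (h12 : n2 ≤ n1) (h23 : n3 ≤ n2) (h3 : 1 ≤ n3) :
    ∃ G : SimpleGraph (Fin n1 ⊕ Fin n2 ⊕ Fin n3),
      G ≤ triK n1 n2 n3 ∧ ¬ HasC4Multi G triPart ∧ G.edgeSet.ncard = n1 * n2 + 2 * n3 := by
  refine ⟨myG n1 n2 n3, myG_le n1 n2 n3, myG_noC4 n1 n2 n3, ?_⟩
  rw [myG_edgeSet n1 n2 n3 (h23.trans h12) h23]
  exact myG_count n1 n2 n3 (h23.trans h12) h23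
end

section
/- For integers n1 ≥ n2 ≥ n3 ≥ 1, there exists a subgraph G of K_{n1,n2,n3} with exactly n1·n2 + n3 edges that contains no triangle and no multipartite 4-cycle; for example, the graph consisting of all edges between V1 and V2, together with a matching of size n3 joining each vertex of V3 to a distinct vertex of V1, and no edges between V2 and V3. -/
/-- The lower-bound construction: all edges between `V1` and `V2`, plus a matching
from `V3` into `V1`. -/
def lowG (n1 n2 n3 : ℕ) : SimpleGraph (Fin n1 ⊕ Fin n2 ⊕ Fin n3) where
  Adj u v := match u, v with
    | Sum.inl _, Sum.inr (Sum.inl _) => True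
    | Sum.inr (Sum.inl _), Sum.inl _ => True
    | Sum.inl i, Sum.inr (Sum.inr k) => (i : ℕ) = (k : ℕ)
    | Sum.inr (Sum.inr k), Sum.inl i => (i : ℕ) = (k : ℕ)
    | _, _ => False
  symm := by
    constructor
    rintro (i | j | k) (i' | j' | k') h <;> simp_all [Eq.comm]
  loopless := by
    constructor
    rintro (i | j | k) h <;> simp_all

lemma lowG_side {n1 n2 n3 : ℕ} {u v : Fin n1 ⊕ Fin n2 ⊕ Fin n3}
    (h : (lowG n1 n2 n3).Adj u v) : u.isLeft ≠ v.isLeft := by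
  rcases u with i | j | k <;> rcases v with i' | j' | k' <;> simp_all [lowG]

lemma lowG_adj_right {n1 n2 n3 : ℕ} {u : Fin n1 ⊕ Fin n2 ⊕ Fin n3} {k : Fin n3}
    (h : (lowG n1 n2 n3).Adj u (Sum.inr (Sum.inr k))) :
    ∃ i : Fin n1, u = Sum.inl i ∧ (i : ℕ) = (k : ℕ) := by
  rcases u with i | j | k' <;> simp_all [lowG]

/-- Parametrization of the edges of `lowG`. -/
def lowF (n1 n2 n3 : ℕ) (h : n3 ≤ n1) :
    Fin n1 × Fin n2 ⊕ Fin n3 → Sym2 (Fin n1 ⊕ Fin n2 ⊕ Fin n3)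
  | Sum.inl (i, j) => s(Sum.inl i, Sum.inr (Sum.inl j))
  | Sum.inr k => s(Sum.inl (Fin.castLE h k), Sum.inr (Sum.inr k))

lemma lowF_injective (n1 n2 n3 : ℕ) (h : n3 ≤ n1) :
    Function.Injective (lowF n1 n2 n3 h) := by
  rintro (⟨i, j⟩ | k) (⟨i', j'⟩ | k') hxy <;>
    simp_all [lowF, Sym2.eq_iff, Prod.ext_iff, Fin.ext_iff]

lemma lowG_edgeSet (n1 n2 n3 : ℕ) (h : n3 ≤ n1) :
    (lowG n1 n2 n3).edgeSet = Set.range (lowF n1 n2 n3 h) := by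
  ext e
  induction e using Sym2.ind with
  | _ u v =>
    simp only [SimpleGraph.mem_edgeSet, Set.mem_range]
    constructor
    · rintro hadj
      rcases u with i | j | k <;> rcases v with i' | j' | k'
      · exact hadj.elim
      · exact ⟨Sum.inl (i, j'), rfl⟩
      · refine ⟨Sum.inr k', ?_⟩
        have hik : (i : ℕ) = (k' : ℕ) := hadj
        simp [lowF, Sym2.eq_iff, Fin.ext_iff, hik]
      · exact ⟨Sum.inl (i', j), Sym2.eq_swap⟩
      · exact hadj.elim
      · exact hadj.elim
      · refine ⟨Sum.inr k, ?_⟩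
        have hik : (i' : ℕ) = (k : ℕ) := hadj
        rw [Sym2.eq_swap]
        simp [lowF, Sym2.eq_iff, Fin.ext_iff, hik]
      · exact hadj.elim
      · exact hadj.elim
    · rintro ⟨(⟨i, j⟩ | k), hx⟩ <;>
      · rcases Sym2.eq_iff.1 hx.symm with ⟨rfl, rfl⟩ | ⟨rfl, rfl⟩ <;>
          simp [lowG]

lemma lowG_ncard (n1 n2 n3 : ℕ) (h : n3 ≤ n1) :
    (lowG n1 n2 n3).edgeSet.ncard = n1 * n2 + n3 := by
  rw [lowG_edgeSet n1 n2 n3 h, ← Nat.card_coe_set_eq,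
    Nat.card_range_of_injective (lowF_injective n1 n2 n3 h)]
  simp


/-- there is a subgraph of `K_{n1,n2,n3}` with no triangle and no
multipartite 4-cycle and exactly `n1*n2 + n3` edges. -/
theorem turan_C3_C4multi_lower (n1 n2 n3 : ℕ) (h12 : n2 ≤ n1) (h23 : n3 ≤ n2) (h3 : 1 ≤ n3) :
    ∃ G : SimpleGraph (Fin n1 ⊕ Fin n2 ⊕ Fin n3),
      G ≤ triK n1 n2 n3 ∧ G.CliqueFree 3 ∧ ¬ HasC4Multi G triPart ∧
      G.edgeSet.ncard = n1 * n2 + n3 := by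
  refine ⟨lowG n1 n2 n3, ?_, ?_, ?_, lowG_ncard n1 n2 n3 (h23.trans h12)⟩
  · intro u v huv
    rcases u with i | j | k <;> rcases v with i' | j' | k' <;>
      first
        | exact huv.elim
        | simp [triK, triPart]
  · intro s hs
    obtain ⟨a, b, c, hab, hac, hbc, rfl⟩ := Finset.card_eq_three.1 hs.2
    have h1 := lowG_side (hs.1 (by simp) (by simp) hab)
    have h2 := lowG_side (hs.1 (by simp) (by simp) hbc)
    have h3 := lowG_side (hs.1 (by simp) (by simp) hac)
    cases hA : a.isLeft <;> cases hB : b.isLeft <;> cases hC : c.isLeft <;> simp_all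
  · rintro ⟨a, b, c, d, hab, hac, had, hbc, hbd, hcd, e1, e2, e3, e4, hall⟩
    obtain ⟨v, hv, hpv⟩ := hall 2
    obtain ⟨k, rfl⟩ : ∃ k : Fin n3, v = Sum.inr (Sum.inr k) := by
      rcases v with i | j | k
      · simp [triPart] at hpv
      · simp [triPart] at hpv
      · exact ⟨k, rfl⟩
    simp only [Set.mem_insert_iff, Set.mem_singleton_iff] at hv
    rcases hv with rfl | rfl | rfl | rfl
    · obtain ⟨i, rfl, hi⟩ := lowG_adj_right e1.symm
      obtain ⟨i', rfl, hi'⟩ := lowG_adj_right e4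
      exact hbd (congrArg Sum.inl (Fin.ext (hi.trans hi'.symm)))
    · obtain ⟨i, rfl, hi⟩ := lowG_adj_right e1
      obtain ⟨i', rfl, hi'⟩ := lowG_adj_right e2.symm
      exact hac (congrArg Sum.inl (Fin.ext (hi.trans hi'.symm)))
    · obtain ⟨i, rfl, hi⟩ := lowG_adj_right e2
      obtain ⟨i', rfl, hi'⟩ := lowG_adj_right e3.symm
      exact hbd (congrArg Sum.inl (Fin.ext (hi.trans hi'.symm)))
    · obtain ⟨i, rfl, hi⟩ := lowG_adj_right e3
      obtain ⟨i', rfl, hi'⟩ := lowG_adj_right e4.symm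
      exact hac (congrArg Sum.inl (Fin.ext (hi.trans hi'.symm))).symm
end

section
/- For integers n1 ≥ n2 ≥ n3 ≥ 1, there is an edge-coloring of K_{n1,n2,n3} using exactly n1·n2 + n3 + 1 colors with no rainbow multipartite 4-cycle: give every edge between V1 and V2 its own distinct color (n1·n2 colors), for each vertex v of V3 color all edges between v and V1 with one new color assigned to v (n3 colors), and color all edges between V2 and V3 with one further new color. -/
/-- The coloring used in the lower-bound construction. -/
def col (n1 n2 n3 : ℕ) : (Fin n1 ⊕ Fin n2 ⊕ Fin n3) → (Fin n1 ⊕ Fin n2 ⊕ Fin n3) → ℕ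
  | Sum.inl i, Sum.inr (Sum.inl j) => i * n2 + j
  | Sum.inr (Sum.inl j), Sum.inl i => i * n2 + j
  | Sum.inl _, Sum.inr (Sum.inr k) => n1 * n2 + k
  | Sum.inr (Sum.inr k), Sum.inl _ => n1 * n2 + k
  | _, _ => n1 * n2 + n3

lemma col_symm (n1 n2 n3 : ℕ) (u v : Fin n1 ⊕ Fin n2 ⊕ Fin n3) :
    col n1 n2 n3 u v = col n1 n2 n3 v u := by
  rcases u with i | j | k <;> rcases v with i' | j' | k' <;> rfl

/-- there is an edge-coloring of `K_{n1,n2,n3}` using exactly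
`n1*n2 + n3 + 1` colors with no rainbow multipartite 4-cycle. -/
theorem antiRamsey_C4multi_lower (n1 n2 n3 : ℕ) (h12 : n2 ≤ n1) (h23 : n3 ≤ n2) (h3 : 1 ≤ n3) :
    ∃ c : Sym2 (Fin n1 ⊕ Fin n2 ⊕ Fin n3) → ℕ,
      (c '' (triK n1 n2 n3).edgeSet).ncard = n1 * n2 + n3 + 1 ∧
      ¬ HasRainbowC4Multi (triK n1 n2 n3) triPart c := by
  have hn1 : 0 < n1 := by omega
  have hn2 : 0 < n2 := by omega
  have hn3 : 0 < n3 := by omega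
  refine ⟨Sym2.lift ⟨col n1 n2 n3, col_symm n1 n2 n3⟩, ?_, ?_⟩
  · have himg : (Sym2.lift ⟨col n1 n2 n3, col_symm n1 n2 n3⟩) '' (triK n1 n2 n3).edgeSet
        = Set.Iio (n1 * n2 + n3 + 1) := by
      ext m
      constructor
      · rintro ⟨s, hs, rfl⟩
        induction s using Sym2.ind with
        | _ u v =>
          rw [SimpleGraph.mem_edgeSet] at hs
          rcases u with i | j | k <;> rcases v with i' | j' | k' <;>
            simp_all [triK, triPart, col, Set.mem_Iio]
          · -- i * n2 + j' < n1*n2+n3+1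
            have hi : (i : ℕ) + 1 ≤ n1 := i.isLt
            have hj : (j' : ℕ) < n2 := j'.isLt
            apply Nat.le_of_lt_succ
            calc (i : ℕ) * n2 + (j' : ℕ) < ((i : ℕ) + 1) * n2 := by
                  rw [add_mul, one_mul]; omega
              _ ≤ n1 * n2 := Nat.mul_le_mul_right _ hi
              _ < n1 * n2 + n3 + 1 := by omega
          · have hi : (i' : ℕ) + 1 ≤ n1 := i'.isLt
            have hj : (j : ℕ) < n2 := j.isLt
            apply Nat.le_of_lt_succ
            calc (i' : ℕ) * n2 + (j : ℕ) < ((i' : ℕ) + 1) * n2 := by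
                  rw [add_mul, one_mul]; omega
              _ ≤ n1 * n2 := Nat.mul_le_mul_right _ hi
              _ < n1 * n2 + n3 + 1 := by omega
      · intro hm
        rw [Set.mem_Iio] at hm
        by_cases h1 : m < n1 * n2
        · refine ⟨s(Sum.inl ⟨m / n2, ?_⟩, Sum.inr (Sum.inl ⟨m % n2, Nat.mod_lt _ hn2⟩)), ?_, ?_⟩
          · exact (Nat.div_lt_iff_lt_mul hn2).2 h1
          · rw [SimpleGraph.mem_edgeSet]
            simp [triK, triPart]
          · have := Nat.div_add_mod m n2
            rw [Nat.mul_comm] at this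
            simp [col]
            omega
        · by_cases h2 : m < n1 * n2 + n3
          · refine ⟨s(Sum.inl ⟨0, hn1⟩, Sum.inr (Sum.inr ⟨m - n1 * n2, by omega⟩)), ?_, ?_⟩
            · rw [SimpleGraph.mem_edgeSet]
              simp [triK, triPart]
            · simp [col]
              omega
          · refine ⟨s(Sum.inr (Sum.inl ⟨0, hn2⟩), Sum.inr (Sum.inr ⟨0, hn3⟩)), ?_, ?_⟩
            · rw [SimpleGraph.mem_edgeSet]
              simp [triK, triPart]
            · simp [col]
              omega
    rw [himg, ← Finset.coe_Iio, Set.ncard_coe_finset, Nat.card_Iio]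
  · rintro ⟨a, b, d, e, hab, had, hae, hbd, hbe, hde, Aab, Abd, Ade, Aea, hcov, hpw⟩
    have hcov2 := hcov 2
    have A1 : triPart a ≠ triPart b := Aab
    have A2 : triPart b ≠ triPart d := Abd
    have A3 : triPart d ≠ triPart e := Ade
    have A4 : triPart e ≠ triPart a := Aea
    clear Aab Abd Ade Aea hcov
    simp only [List.pairwise_cons, List.mem_cons, List.not_mem_nil, List.mem_singleton,
      or_false, List.Pairwise.nil] at hpw
    rcases a with i1 | j1 | k1 <;> rcases b with i2 | j2 | k2 <;>
      rcases d with i3 | j3 | k3 <;> rcases e with i4 | j4 | k4 <;>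
      simp_all [triPart, col]
end

section
/- Let G be a 3-partite graph with nonempty vertex parts X, Y, Z such that every vertex x in X has at least one neighbor in Y and at least one neighbor in Z. If G contains no multipartite 4-cycle, then e(G) ≤ |Y|·|Z| + 2·|X|. -/
private lemma lemma1_i_arith (a b m ne : ℕ) (ha : 1 ≤ a) (hb : 1 ≤ b)
    (hm1 : m ≤ a) (hm2 : m ≤ b) (hs : m + ne = a * b) : a + b ≤ ne + 2 := by
  rcases Nat.lt_or_ge a 2 with ha2 | ha2
  · have ha1 : a = 1 := by omega
    subst ha1
    rw [one_mul] at hs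
    omega
  · rcases Nat.lt_or_ge b 2 with hb2 | hb2
    · have hb1 : b = 1 := by omega
      subst hb1
      rw [mul_one] at hs
      omega
    · obtain ⟨a', rfl⟩ : ∃ a', a = a' + 2 := ⟨a - 2, by omega⟩
      obtain ⟨b', rfl⟩ : ∃ b', b = b' + 2 := ⟨b - 2, by omega⟩
      nlinarith [hs, hm1, hm2]

/-- Lemma 1(i): if every vertex of the part `X = p⁻¹(0)` has a neighbor in
`Y = p⁻¹(1)` and a neighbor in `Z = p⁻¹(2)`, and `G` has no multipartite 4-cycle, then
`e(G) ≤ |Y|·|Z| + 2·|X|`. -/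
theorem lemma1_i {V : Type*} [Fintype V] (G : SimpleGraph V) (p : V → Fin 3)
    (hpart : ∀ u v : V, G.Adj u v → p u ≠ p v)
    (hX : ∃ v, p v = 0) (hY : ∃ v, p v = 1) (hZ : ∃ v, p v = 2)
    (hnbr : ∀ x : V, p x = 0 →
      (∃ y, G.Adj x y ∧ p y = 1) ∧ (∃ z, G.Adj x z ∧ p z = 2))
    (hfree : ¬ HasC4Multi G p) :
    G.edgeSet.ncard ≤
      {v | p v = 1}.ncard * {v | p v = 2}.ncard + 2 * {v | p v = 0}.ncard := by
  classical
  -- distinctness from parts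
  have pdiff : ∀ {u v : V} {i j : Fin 3}, p u = i → p v = j → i ≠ j → u ≠ v := by
    rintro u v i j hu hv hij rfl
    exact hij (hu.symm.trans hv)
  -- C4 helpers
  have hA : ∀ x x' y z : V, p x = 0 → p x' = 0 → p y = 1 → p z = 2 → x ≠ x' →
      G.Adj x y → G.Adj x' y → G.Adj x z → G.Adj x' z → False := by
    intro x x' y z hx hx' hy hz hne axy ax'y axz ax'z
    apply hfree
    refine ⟨x, y, x', z, pdiff hx hy (by decide), hne, pdiff hx hz (by decide),
      (pdiff hx' hy (by decide)).symm, pdiff hy hz (by decide),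
      pdiff hx' hz (by decide), axy, ax'y.symm, ax'z, axz.symm, ?_⟩
    intro i
    fin_cases i
    · exact ⟨x, by simp, hx⟩
    · exact ⟨y, by simp, hy⟩
    · exact ⟨z, by simp, hz⟩
  have hB : ∀ x y z z' : V, p x = 0 → p y = 1 → p z = 2 → p z' = 2 → z ≠ z' →
      G.Adj x z → G.Adj x z' → G.Adj y z → G.Adj y z' → False := by
    intro x y z z' hx hy hz hz' hne axz axz' ayz ayz'
    apply hfree
    refine ⟨x, z, y, z', pdiff hx hz (by decide), pdiff hx hy (by decide),
      pdiff hx hz' (by decide), (pdiff hy hz (by decide)).symm, hne,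
      pdiff hy hz' (by decide), axz, ayz.symm, ayz', axz'.symm, ?_⟩
    intro i
    fin_cases i
    · exact ⟨x, by simp, hx⟩
    · exact ⟨y, by simp, hy⟩
    · exact ⟨z, by simp, hz⟩
  have hC : ∀ x y y' z : V, p x = 0 → p y = 1 → p y' = 1 → p z = 2 → y ≠ y' →
      G.Adj x y → G.Adj x y' → G.Adj z y → G.Adj z y' → False := by
    intro x y y' z hx hy hy' hz hne axy axy' azy azy'
    apply hfree
    refine ⟨x, y, z, y', pdiff hx hy (by decide), pdiff hx hz (by decide),
      pdiff hx hy' (by decide), pdiff hy hz (by decide), hne,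
      (pdiff hy' hz (by decide)).symm, axy, azy.symm, azy', axy'.symm, ?_⟩
    intro i
    fin_cases i
    · exact ⟨x, by simp, hx⟩
    · exact ⟨y, by simp, hy⟩
    · exact ⟨z, by simp, hz⟩
  -- the finsets
  set E : Finset (Sym2 V) := G.edgeSet.toFinset with hEd
  have hmemE : ∀ u v : V, s(u, v) ∈ E ↔ G.Adj u v := by
    intro u v; simp [hEd]
  set X : Finset V := Finset.univ.filter (fun v => p v = 0) with hXd
  set Y : Finset V := Finset.univ.filter (fun v => p v = 1) with hYd
  set Z : Finset V := Finset.univ.filter (fun v => p v = 2) with hZd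
  set NY : V → Finset V := fun x => Y.filter (fun y => G.Adj x y) with hNYd
  set NZ : V → Finset V := fun x => Z.filter (fun z => G.Adj x z) with hNZd
  set NE : V → Finset (V × V) :=
    fun x => ((NY x) ×ˢ (NZ x)).filter (fun q => ¬ G.Adj q.1 q.2) with hNEd
  set M : V → Finset (V × V) :=
    fun x => ((NY x) ×ˢ (NZ x)).filter (fun q => G.Adj q.1 q.2) with hMd
  set AP : Finset (V × V) := (Y ×ˢ Z).filter (fun q => G.Adj q.1 q.2) with hAPd
  set NAP : Finset (V × V) := (Y ×ˢ Z).filter (fun q => ¬ G.Adj q.1 q.2) with hNAPd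
  -- ncard conversions
  have hcard0 : {v | p v = 0}.ncard = X.card := by
    rw [Set.ncard_eq_toFinset_card']; congr 1; ext v; simp [hXd]
  have hcard1 : {v | p v = 1}.ncard = Y.card := by
    rw [Set.ncard_eq_toFinset_card']; congr 1; ext v; simp [hYd]
  have hcard2 : {v | p v = 2}.ncard = Z.card := by
    rw [Set.ncard_eq_toFinset_card']; congr 1; ext v; simp [hZd]
  have hcardE : G.edgeSet.ncard = E.card := by
    rw [Set.ncard_eq_toFinset_card']
  rw [hcard0, hcard1, hcard2, hcardE]
  -- classification of edges
  have fin3 : ∀ i : Fin 3, i = 0 ∨ i = 1 ∨ i = 2 := by decide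
  set P01 : Sym2 V → Prop := fun e => ∃ u v, e = s(u, v) ∧ p u = 0 ∧ p v = 1 with hP01d
  set P02 : Sym2 V → Prop := fun e => ∃ u v, e = s(u, v) ∧ p u = 0 ∧ p v = 2 with hP02d
  set P12 : Sym2 V → Prop := fun e => ∃ u v, e = s(u, v) ∧ p u = 1 ∧ p v = 2 with hP12d
  have hcover : ∀ e ∈ E, P01 e ∨ P02 e ∨ P12 e := by
    intro e
    induction e using Sym2.ind with
    | _ u v =>
      intro he
      have hadj : G.Adj u v := (hmemE u v).mp he
      have hne := hpart u v hadj
      have hswap : s(u, v) = s(v, u) := Sym2.eq_swap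
      rcases fin3 (p u) with hu | hu | hu <;> rcases fin3 (p v) with hv | hv | hv
      all_goals first
        | exact absurd (hu.trans hv.symm) hne
        | exact Or.inl ⟨u, v, rfl, hu, hv⟩
        | exact Or.inl ⟨v, u, hswap, hv, hu⟩
        | exact Or.inr (Or.inl ⟨u, v, rfl, hu, hv⟩)
        | exact Or.inr (Or.inl ⟨v, u, hswap, hv, hu⟩)
        | exact Or.inr (Or.inr ⟨u, v, rfl, hu, hv⟩)
        | exact Or.inr (Or.inr ⟨v, u, hswap, hv, hu⟩)
  have hsub : E ⊆ E.filter P01 ∪ (E.filter P02 ∪ E.filter P12) := by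
    intro e he
    rcases hcover e he with h | h | h
    · exact Finset.mem_union_left _ (Finset.mem_filter.mpr ⟨he, h⟩)
    · exact Finset.mem_union_right _
        (Finset.mem_union_left _ (Finset.mem_filter.mpr ⟨he, h⟩))
    · exact Finset.mem_union_right _
        (Finset.mem_union_right _ (Finset.mem_filter.mpr ⟨he, h⟩))
  have hEcard : E.card ≤ (E.filter P01).card + ((E.filter P02).card + (E.filter P12).card) :=
    (Finset.card_le_card hsub).trans <| (Finset.card_union_le _ _).trans <|
      Nat.add_le_add_left (Finset.card_union_le _ _) _
  -- bound on XY edges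
  have h01 : (E.filter P01).card ≤ ∑ x ∈ X, (NY x).card := by
    have hss : E.filter P01 ⊆ X.biUnion (fun x => (NY x).image (fun y => s(x, y))) := by
      intro e he
      rw [Finset.mem_filter] at he
      obtain ⟨heE, u, v, rfl, hu, hv⟩ := he
      have hadj : G.Adj u v := (hmemE u v).mp heE
      refine Finset.mem_biUnion.mpr ⟨u, by simp [hXd, hu],
        Finset.mem_image.mpr ⟨v, ?_, rfl⟩⟩
      simp [hNYd, hYd, hv, hadj]
    exact (Finset.card_le_card hss).trans <| (Finset.card_biUnion_le).trans <|
      Finset.sum_le_sum fun x _ => Finset.card_image_le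
  have h02 : (E.filter P02).card ≤ ∑ x ∈ X, (NZ x).card := by
    have hss : E.filter P02 ⊆ X.biUnion (fun x => (NZ x).image (fun z => s(x, z))) := by
      intro e he
      rw [Finset.mem_filter] at he
      obtain ⟨heE, u, v, rfl, hu, hv⟩ := he
      have hadj : G.Adj u v := (hmemE u v).mp heE
      refine Finset.mem_biUnion.mpr ⟨u, by simp [hXd, hu],
        Finset.mem_image.mpr ⟨v, ?_, rfl⟩⟩
      simp [hNZd, hZd, hv, hadj]
    exact (Finset.card_le_card hss).trans <| (Finset.card_biUnion_le).trans <|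
      Finset.sum_le_sum fun x _ => Finset.card_image_le
  -- bound on YZ edges
  have h12 : (E.filter P12).card ≤ AP.card := by
    apply Finset.card_le_card_of_surjOn (fun q : V × V => s(q.1, q.2))
    intro e he
    simp only [Finset.coe_filter, Set.mem_setOf_eq] at he
    obtain ⟨heE, u, v, rfl, hu, hv⟩ := he
    have hadj : G.Adj u v := (hmemE u v).mp heE
    refine ⟨(u, v), ?_, rfl⟩
    simp [hAPd, hYd, hZd, hu, hv, hadj]
  -- per-vertex bound
  have key : ∀ x ∈ X, (NY x).card + (NZ x).card ≤ (NE x).card + 2 := by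
    intro x hx
    have hx0 : p x = 0 := by simpa [hXd] using hx
    obtain ⟨⟨y0, hy0a, hy0p⟩, ⟨z0, hz0a, hz0p⟩⟩ := hnbr x hx0
    have hNYpos : 1 ≤ (NY x).card :=
      Finset.card_pos.mpr ⟨y0, by simp [hNYd, hYd, hy0a, hy0p]⟩
    have hNZpos : 1 ≤ (NZ x).card :=
      Finset.card_pos.mpr ⟨z0, by simp [hNZd, hZd, hz0a, hz0p]⟩
    have hsplit : (M x).card + (NE x).card = (NY x).card * (NZ x).card := by
      rw [hMd, hNEd]
      rw [Finset.card_filter_add_card_filter_not, Finset.card_product]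
    have hNYmem : ∀ {q : V × V}, q ∈ M x → q.1 ∈ NY x ∧ q.2 ∈ NZ x ∧ G.Adj q.1 q.2 := by
      intro q hq
      rw [hMd, Finset.mem_filter, Finset.mem_product] at hq
      exact ⟨hq.1.1, hq.1.2, hq.2⟩
    have hNYadj : ∀ {y : V}, y ∈ NY x → G.Adj x y ∧ p y = 1 := by
      intro y hy
      rw [hNYd, Finset.mem_filter] at hy
      refine ⟨hy.2, ?_⟩
      have := hy.1; rw [hYd, Finset.mem_filter] at this; exact this.2
    have hNZadj : ∀ {z : V}, z ∈ NZ x → G.Adj x z ∧ p z = 2 := by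
      intro z hz
      rw [hNZd, Finset.mem_filter] at hz
      refine ⟨hz.2, ?_⟩
      have := hz.1; rw [hZd, Finset.mem_filter] at this; exact this.2
    have hM1 : (M x).card ≤ (NY x).card := by
      apply Finset.card_le_card_of_injOn Prod.fst
      · intro q hq; exact (hNYmem hq).1
      · intro q hq q' hq' hfst
        obtain ⟨hy, hz, ha⟩ := hNYmem hq
        obtain ⟨hy', hz', ha'⟩ := hNYmem hq'
        have hsnd : q.2 = q'.2 := by
          by_contra hne
          exact hB x q.1 q.2 q'.2 hx0 (hNYadj hy).2 (hNZadj hz).2 (hNZadj hz').2 hne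
            (hNZadj hz).1 (hNZadj hz').1 ha (hfst ▸ ha')
        exact Prod.ext hfst hsnd
    have hM2 : (M x).card ≤ (NZ x).card := by
      apply Finset.card_le_card_of_injOn Prod.snd
      · intro q hq; exact (hNYmem hq).2.1
      · intro q hq q' hq' hsnd
        obtain ⟨hy, hz, ha⟩ := hNYmem hq
        obtain ⟨hy', hz', ha'⟩ := hNYmem hq'
        have hfst : q.1 = q'.1 := by
          by_contra hne
          exact hC x q.1 q'.1 q.2 hx0 (hNYadj hy).2 (hNYadj hy').2 (hNZadj hz).2 hne
            (hNYadj hy).1 (hNYadj hy').1 ha.symm (hsnd ▸ ha'.symm)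
        exact Prod.ext hfst hsnd
    exact lemma1_i_arith _ _ _ _ hNYpos hNZpos hM1 hM2 hsplit
  -- disjointness of the NE's
  have hdisj : ∀ x ∈ X, ∀ x' ∈ X, x ≠ x' → Disjoint (NE x) (NE x') := by
    intro x hx x' hx' hne
    rw [Finset.disjoint_left]
    intro q hq hq'
    have hx0 : p x = 0 := by simpa [hXd] using hx
    have hx'0 : p x' = 0 := by simpa [hXd] using hx'
    rw [hNEd, Finset.mem_filter, Finset.mem_product] at hq hq'
    have hy := hq.1.1
    have hz := hq.1.2
    have hy' := hq'.1.1
    have hz' := hq'.1.2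
    rw [hNYd, Finset.mem_filter, hYd, Finset.mem_filter] at hy hy'
    rw [hNZd, Finset.mem_filter, hZd, Finset.mem_filter] at hz hz'
    exact hA x x' q.1 q.2 hx0 hx'0 hy.1.2 hz.1.2 hne hy.2 hy'.2 hz.2 hz'.2
  have hNEsum : ∑ x ∈ X, (NE x).card ≤ NAP.card := by
    rw [← Finset.card_biUnion hdisj]
    apply Finset.card_le_card
    intro q hq
    rw [Finset.mem_biUnion] at hq
    obtain ⟨x, hx, hq⟩ := hq
    rw [hNEd, Finset.mem_filter, Finset.mem_product] at hq
    have hy := hq.1.1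
    have hz := hq.1.2
    rw [hNYd, Finset.mem_filter] at hy
    rw [hNZd, Finset.mem_filter] at hz
    rw [hNAPd, Finset.mem_filter, Finset.mem_product]
    exact ⟨⟨hy.1, hz.1⟩, hq.2⟩
  have hAPNAP : AP.card + NAP.card = Y.card * Z.card := by
    rw [hAPd, hNAPd, Finset.card_filter_add_card_filter_not, Finset.card_product]
  -- put it together
  have hsumkey : ∑ x ∈ X, (NY x).card + ∑ x ∈ X, (NZ x).card ≤ NAP.card + 2 * X.card := by
    calc ∑ x ∈ X, (NY x).card + ∑ x ∈ X, (NZ x).card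
        = ∑ x ∈ X, ((NY x).card + (NZ x).card) := (Finset.sum_add_distrib).symm
      _ ≤ ∑ x ∈ X, ((NE x).card + 2) := Finset.sum_le_sum key
      _ = ∑ x ∈ X, (NE x).card + 2 * X.card := by
          rw [Finset.sum_add_distrib, Finset.sum_const, smul_eq_mul, mul_comm]
      _ ≤ NAP.card + 2 * X.card := by omega
  omega
end

section
/- Let G be a 3-partite graph with nonempty vertex parts X, Y, Z such that every vertex x in X has at least one neighbor in Y and at least one neighbor in Z. If G contains no triangle and no multipartite 4-cycle, then e(G) ≤ |Y|·|Z| + |X|. -/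
open Classical in
/-- Auxiliary map for edges touching the `X` part. -/
noncomputable def auxA {V : Type*} (p : V → Fin 3) (Yx Zx : V → V) (x w : V) : (V × V) ⊕ V :=
  if p w = 1 then Sum.inl (w, Zx x) else if w = Zx x then Sum.inr x else Sum.inl (Yx x, w)

open Classical in
noncomputable def auxG {V : Type*} (p : V → Fin 3) (Yx Zx : V → V) (x₀ u v : V) : (V × V) ⊕ V :=
  if p u = 0 then (if p v = 0 then Sum.inl (x₀, x₀) else auxA p Yx Zx u v)
  else if p v = 0 then auxA p Yx Zx v u
  else if p u = 1 ∧ p v = 2 then Sum.inl (u, v)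
  else if p u = 2 ∧ p v = 1 then Sum.inl (v, u)
  else Sum.inl (x₀, x₀)

lemma fin3cases (i : Fin 3) : i = 0 ∨ i = 1 ∨ i = 2 := by omega

lemma auxG_symm {V : Type*} (p : V → Fin 3) (Yx Zx : V → V) (x₀ u v : V) :
    auxG p Yx Zx x₀ u v = auxG p Yx Zx x₀ v u := by
  unfold auxG
  rcases fin3cases (p u) with h | h | h <;> rcases fin3cases (p v) with h' | h' | h' <;>
    simp [h, h']

/-- Lemma 1(ii): if every vertex of the part `X = p⁻¹(0)` has a neighbor in
`Y = p⁻¹(1)` and a neighbor in `Z = p⁻¹(2)`, and `G` has no triangle and no multipartite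
4-cycle, then `e(G) ≤ |Y|·|Z| + |X|`. -/
theorem lemma1_ii {V : Type*} [Fintype V] (G : SimpleGraph V) (p : V → Fin 3)
    (hpart : ∀ u v : V, G.Adj u v → p u ≠ p v)
    (hX : ∃ v, p v = 0) (hY : ∃ v, p v = 1) (hZ : ∃ v, p v = 2)
    (hnbr : ∀ x : V, p x = 0 →
      (∃ y, G.Adj x y ∧ p y = 1) ∧ (∃ z, G.Adj x z ∧ p z = 2))
    (htri : G.CliqueFree 3) (hfree : ¬ HasC4Multi G p) :
    G.edgeSet.ncard ≤
      {v | p v = 1}.ncard * {v | p v = 2}.ncard + {v | p v = 0}.ncard := by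
  classical
  obtain ⟨x₀, hx₀⟩ := hX
  -- choice of neighbors
  obtain ⟨Yx, Zx, hYZ⟩ : ∃ Yx Zx : V → V, ∀ x, p x = 0 →
      G.Adj x (Yx x) ∧ p (Yx x) = 1 ∧ G.Adj x (Zx x) ∧ p (Zx x) = 2 := by
    refine ⟨fun x => if h : p x = 0 then ((hnbr x h).1).choose else x,
            fun x => if h : p x = 0 then ((hnbr x h).2).choose else x, fun x hx => ?_⟩
    simp only [dif_pos hx]
    exact ⟨((hnbr x hx).1).choose_spec.1, ((hnbr x hx).1).choose_spec.2,
           ((hnbr x hx).2).choose_spec.1, ((hnbr x hx).2).choose_spec.2⟩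
  have noTri : ∀ a b c : V, G.Adj a b → G.Adj a c → G.Adj b c → False := by
    intro a b c hab hac hbc
    exact htri {a, b, c} (SimpleGraph.is3Clique_triple_iff.mpr ⟨hab, hac, hbc⟩)
  have nePart : ∀ {u v : V}, p u ≠ p v → u ≠ v := by
    intro u v h hv; exact h (by rw [hv])
  have noC4 : ∀ x y x' z : V, p x = 0 → p x' = 0 → p y = 1 → p z = 2 →
      x ≠ x' → G.Adj x y → G.Adj y x' → G.Adj x' z → G.Adj z x → False := by
    intro x y x' z hx hx' hy hz hxx' h1 h2 h3 h4
    apply hfree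
    refine ⟨x, y, x', z, nePart (by rw [hx, hy]; decide), hxx',
      nePart (by rw [hx, hz]; decide), nePart (by rw [hy, hx']; decide),
      nePart (by rw [hy, hz]; decide), nePart (by rw [hx', hz]; decide),
      h1, h2, h3, h4, ?_⟩
    intro i
    rcases fin3cases i with rfl | rfl | rfl
    · exact ⟨x, by simp, hx⟩
    · exact ⟨y, by simp, hy⟩
    · exact ⟨z, by simp, hz⟩
  set Φ : Sym2 V → (V × V) ⊕ V := Sym2.lift ⟨auxG p Yx Zx x₀, auxG_symm p Yx Zx x₀⟩ with hΦ
  -- classification of edges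
  have classify : ∀ e ∈ G.edgeSet,
      (∃ y z, p y = 1 ∧ p z = 2 ∧ G.Adj y z ∧ e = s(y, z) ∧ Φ e = Sum.inl (y, z)) ∨
      (∃ x y, p x = 0 ∧ p y = 1 ∧ G.Adj x y ∧ e = s(x, y) ∧ Φ e = Sum.inl (y, Zx x)) ∨
      (∃ x z, p x = 0 ∧ p z = 2 ∧ G.Adj x z ∧ z ≠ Zx x ∧ e = s(x, z) ∧
        Φ e = Sum.inl (Yx x, z)) ∨
      (∃ x, p x = 0 ∧ e = s(x, Zx x) ∧ Φ e = Sum.inr x) := by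
    intro e he
    induction e with
    | _ u v =>
      rw [SimpleGraph.mem_edgeSet] at he
      have hne := hpart u v he
      have huv : ∀ u v : V, G.Adj u v → p u = 0 → p v ≠ 0 →
          (∃ x y, p x = 0 ∧ p y = 1 ∧ G.Adj x y ∧ s(u,v) = s(x, y) ∧
            Φ s(u,v) = Sum.inl (y, Zx x)) ∨
          (∃ x z, p x = 0 ∧ p z = 2 ∧ G.Adj x z ∧ z ≠ Zx x ∧ s(u,v) = s(x, z) ∧
            Φ s(u,v) = Sum.inl (Yx x, z)) ∨
          (∃ x, p x = 0 ∧ s(u,v) = s(x, Zx x) ∧ Φ s(u,v) = Sum.inr x) := by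
        intro a b hab ha hb
        obtain ⟨hay, hpy, haz, hpz⟩ := hYZ a ha
        have hval : Φ s(a, b) = auxA p Yx Zx a b := by
          show auxG p Yx Zx x₀ a b = _
          simp [auxG, ha, hb]
        rcases fin3cases (p b) with h1 | h1 | h1
        · exact absurd h1 hb
        · refine Or.inl ⟨a, b, ha, h1, hab, rfl, ?_⟩
          rw [hval]; simp [auxA, h1]
        · by_cases hbz : b = Zx a
          · refine Or.inr (Or.inr ⟨a, ha, by rw [hbz], ?_⟩)
            rw [hval]; simp [auxA, hbz, hpz]
          · refine Or.inr (Or.inl ⟨a, b, ha, h1, hab, hbz, rfl, ?_⟩)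
            rw [hval]; simp [auxA, h1, hbz]
      rcases fin3cases (p u) with h | h | h <;> rcases fin3cases (p v) with h' | h' | h'
      · exact absurd (h.trans h'.symm) hne
      · rcases huv u v he h (by rw [h']; decide) with h1 | h1 | h1
        · exact Or.inr (Or.inl h1)
        · exact Or.inr (Or.inr (Or.inl h1))
        · exact Or.inr (Or.inr (Or.inr h1))
      · rcases huv u v he h (by rw [h']; decide) with h1 | h1 | h1
        · exact Or.inr (Or.inl h1)
        · exact Or.inr (Or.inr (Or.inl h1))
        · exact Or.inr (Or.inr (Or.inr h1))
      · rw [Sym2.eq_swap]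
        rcases huv v u he.symm h' (by rw [h]; decide) with h1 | h1 | h1
        · exact Or.inr (Or.inl h1)
        · exact Or.inr (Or.inr (Or.inl h1))
        · exact Or.inr (Or.inr (Or.inr h1))
      · exact absurd (h.trans h'.symm) hne
      · -- p u = 1, p v = 2
        refine Or.inl ⟨u, v, h, h', he, rfl, ?_⟩
        show auxG p Yx Zx x₀ u v = _
        simp [auxG, h, h']
      · rw [Sym2.eq_swap]
        rcases huv v u he.symm h' (by rw [h]; decide) with h1 | h1 | h1
        · exact Or.inr (Or.inl h1)
        · exact Or.inr (Or.inr (Or.inl h1))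
        · exact Or.inr (Or.inr (Or.inr h1))
      · -- p u = 2, p v = 1
        refine Or.inl ⟨v, u, h', h, he.symm, Sym2.eq_swap, ?_⟩
        show auxG p Yx Zx x₀ u v = _
        simp [auxG, h, h']
      · exact absurd (h.trans h'.symm) hne
  -- target set
  set T : Set ((V × V) ⊕ V) :=
    (Sum.inl '' ({v | p v = 1} ×ˢ {v | p v = 2})) ∪ (Sum.inr '' {v | p v = 0}) with hT
  have hsub : Φ '' G.edgeSet ⊆ T := by
    rintro _ ⟨e, he, rfl⟩
    rcases classify e he with ⟨y, z, hy, hz, _, _, hval⟩ | ⟨x, y, hx, hy, _, _, hval⟩ |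
      ⟨x, z, hx, hz, _, _, _, hval⟩ | ⟨x, hx, _, hval⟩
    · exact Or.inl ⟨(y, z), ⟨hy, hz⟩, hval.symm⟩
    · exact Or.inl ⟨(y, Zx x), ⟨hy, (hYZ x hx).2.2.2⟩, hval.symm⟩
    · exact Or.inl ⟨(Yx x, z), ⟨(hYZ x hx).2.1, hz⟩, hval.symm⟩
    · exact Or.inr ⟨x, hx, hval.symm⟩
  have hAB : ∀ e₁ e₂, (∃ y z, p y = 1 ∧ p z = 2 ∧ G.Adj y z ∧ e₁ = s(y, z) ∧
        Φ e₁ = Sum.inl (y, z)) →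
      (∃ x y, p x = 0 ∧ p y = 1 ∧ G.Adj x y ∧ e₂ = s(x, y) ∧ Φ e₂ = Sum.inl (y, Zx x)) →
      Φ e₁ = Φ e₂ → False := by
    rintro e₁ e₂ ⟨y, z, hy, hz, hyz, rfl, hv₁⟩ ⟨x, y', hx, hy', hxy', rfl, hv₂⟩ heq
    rw [hv₁, hv₂] at heq
    obtain ⟨h1, h2⟩ := Prod.mk.injEq .. ▸ (Sum.inl.inj heq)
    exact noTri x y' z hxy' (h2 ▸ (hYZ x hx).2.2.1) (h1 ▸ hyz)
  have hAC : ∀ e₁ e₂, (∃ y z, p y = 1 ∧ p z = 2 ∧ G.Adj y z ∧ e₁ = s(y, z) ∧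
        Φ e₁ = Sum.inl (y, z)) →
      (∃ x z, p x = 0 ∧ p z = 2 ∧ G.Adj x z ∧ z ≠ Zx x ∧ e₂ = s(x, z) ∧
        Φ e₂ = Sum.inl (Yx x, z)) →
      Φ e₁ = Φ e₂ → False := by
    rintro e₁ e₂ ⟨y, z, hy, hz, hyz, rfl, hv₁⟩ ⟨x, z', hx, hz', hxz', hne, rfl, hv₂⟩ heq
    rw [hv₁, hv₂] at heq
    obtain ⟨h1, h2⟩ := Prod.mk.injEq .. ▸ (Sum.inl.inj heq)
    exact noTri x y z' (h1 ▸ (hYZ x hx).1) hxz' (h2 ▸ hyz)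
  have hBC : ∀ e₁ e₂, (∃ x y, p x = 0 ∧ p y = 1 ∧ G.Adj x y ∧ e₁ = s(x, y) ∧
        Φ e₁ = Sum.inl (y, Zx x)) →
      (∃ x z, p x = 0 ∧ p z = 2 ∧ G.Adj x z ∧ z ≠ Zx x ∧ e₂ = s(x, z) ∧
        Φ e₂ = Sum.inl (Yx x, z)) →
      Φ e₁ = Φ e₂ → False := by
    rintro e₁ e₂ ⟨x, y, hx, hy, hxy, rfl, hv₁⟩ ⟨x', z', hx', hz', hxz', hne, rfl, hv₂⟩ heq
    rw [hv₁, hv₂] at heq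
    obtain ⟨h1, h2⟩ := Prod.mk.injEq .. ▸ (Sum.inl.inj heq)
    by_cases hxx : x = x'
    · exact hne (by rw [← hxx, ← h2])
    · exact noC4 x y x' z' hx hx' hy hz' hxx hxy (h1 ▸ (hYZ x' hx').1.symm) hxz'
        (h2 ▸ (hYZ x hx).2.2.1.symm)
  have hinj : Set.InjOn Φ G.edgeSet := by
    intro e₁ he₁ e₂ he₂ heq
    rcases classify e₁ he₁ with cA₁ | cB₁ | cC₁ | cD₁ <;>
      rcases classify e₂ he₂ with cA₂ | cB₂ | cC₂ | cD₂
    · -- A A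
      obtain ⟨y, z, hy, hz, hyz, rfl, hv₁⟩ := cA₁
      obtain ⟨y', z', hy', hz', hyz', rfl, hv₂⟩ := cA₂
      rw [hv₁, hv₂] at heq
      obtain ⟨h1, h2⟩ := Prod.mk.injEq .. ▸ (Sum.inl.inj heq)
      rw [h1, h2]
    · exact (hAB e₁ e₂ cA₁ cB₂ heq).elim
    · exact (hAC e₁ e₂ cA₁ cC₂ heq).elim
    · -- A D : inl vs inr
      obtain ⟨y, z, hy, hz, hyz, he, hv₁⟩ := cA₁
      obtain ⟨x, hx, he', hv₂⟩ := cD₂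
      rw [hv₁, hv₂] at heq
      exact absurd heq (by simp)
    · exact (hAB e₂ e₁ cA₂ cB₁ heq.symm).elim
    · -- B B
      obtain ⟨x, y, hx, hy, hxy, rfl, hv₁⟩ := cB₁
      obtain ⟨x', y', hx', hy', hxy', rfl, hv₂⟩ := cB₂
      rw [hv₁, hv₂] at heq
      obtain ⟨h1, h2⟩ := Prod.mk.injEq .. ▸ (Sum.inl.inj heq)
      by_cases hxx : x = x'
      · rw [hxx, h1]
      · exact (noC4 x y x' (Zx x') hx hx' hy (hYZ x' hx').2.2.2 hxx hxy
          (h1 ▸ hxy'.symm) (hYZ x' hx').2.2.1 (h2 ▸ (hYZ x hx).2.2.1.symm)).elim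
    · exact (hBC e₁ e₂ cB₁ cC₂ heq).elim
    · -- B D
      obtain ⟨x, y, hx, hy, hxy, he, hv₁⟩ := cB₁
      obtain ⟨x', hx', he', hv₂⟩ := cD₂
      rw [hv₁, hv₂] at heq
      exact absurd heq (by simp)
    · exact (hAC e₂ e₁ cA₂ cC₁ heq.symm).elim
    · exact (hBC e₂ e₁ cB₂ cC₁ heq.symm).elim
    · -- C C
      obtain ⟨x, z, hx, hz, hxz, hne, rfl, hv₁⟩ := cC₁
      obtain ⟨x', z', hx', hz', hxz', hne', rfl, hv₂⟩ := cC₂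
      rw [hv₁, hv₂] at heq
      obtain ⟨h1, h2⟩ := Prod.mk.injEq .. ▸ (Sum.inl.inj heq)
      by_cases hxx : x = x'
      · rw [hxx, h2]
      · exact (noC4 x (Yx x) x' z' hx hx' (hYZ x hx).2.1 hz' hxx
          (hYZ x hx).1 (h1 ▸ (hYZ x' hx').1.symm) hxz' (h2 ▸ hxz.symm)).elim
    · -- C D
      obtain ⟨x, z, hx, hz, hxz, hne, he, hv₁⟩ := cC₁
      obtain ⟨x', hx', he', hv₂⟩ := cD₂
      rw [hv₁, hv₂] at heq
      exact absurd heq (by simp)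
    · -- D A
      obtain ⟨x, hx, he', hv₂⟩ := cD₁
      obtain ⟨y, z, hy, hz, hyz, he, hv₁⟩ := cA₂
      rw [hv₁, hv₂] at heq
      exact absurd heq (by simp)
    · -- D B
      obtain ⟨x, hx, he', hv₂⟩ := cD₁
      obtain ⟨x', y, hx', hy, hxy, he, hv₁⟩ := cB₂
      rw [hv₁, hv₂] at heq
      exact absurd heq (by simp)
    · -- D C
      obtain ⟨x, hx, he', hv₂⟩ := cD₁
      obtain ⟨x', z, hx', hz, hxz, hne, he, hv₁⟩ := cC₂
      rw [hv₁, hv₂] at heq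
      exact absurd heq (by simp)
    · -- D D
      obtain ⟨x, hx, h₁, hv₁⟩ := cD₁
      obtain ⟨x', hx', h₂, hv₂⟩ := cD₂
      rw [hv₁, hv₂] at heq
      rw [h₁, h₂, Sum.inr.inj heq]
  have hdj : Disjoint (Sum.inl '' ({v | p v = 1} ×ˢ {v | p v = 2}) : Set ((V × V) ⊕ V))
      (Sum.inr '' {v | p v = 0}) := by
    rw [Set.disjoint_left]
    rintro _ ⟨a, _, rfl⟩ ⟨b, _, h⟩
    simp at h
  calc G.edgeSet.ncard = (Φ '' G.edgeSet).ncard := (Set.ncard_image_of_injOn hinj).symm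
    _ ≤ T.ncard := Set.ncard_le_ncard hsub T.toFinite
    _ ≤ _ := by
        rw [hT, Set.ncard_union_eq hdj (Set.toFinite _) (Set.toFinite _),
          Set.ncard_image_of_injective _ Sum.inl_injective,
          Set.ncard_image_of_injective _ Sum.inr_injective,
          ← Nat.card_coe_set_eq, Nat.card_congr (Equiv.Set.prod _ _), Nat.card_prod,
          Nat.card_coe_set_eq, Nat.card_coe_set_eq]
end

section
/- Let G be a 3-partite graph with vertex parts X, Y, Z that contains no multipartite 4-cycle, and let x be a vertex in X. Then in the subgraph of G induced on the neighborhood N(x) of x, every vertex has degree at most 1; consequently the number of edges of G joining N(x) ∩ Y to N(x) ∩ Z is at most min(|N(x) ∩ Y|, |N(x) ∩ Z|). -/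
/-- in a `C4^multi`-free 3-partite graph, for a vertex `x` of the part
`X = p⁻¹(0)`, the subgraph induced on `N(x)` has maximum degree at most 1; consequently
the number of edges joining `N(x) ∩ Y` to `N(x) ∩ Z` is at most
`min (|N(x) ∩ Y|) (|N(x) ∩ Z|)`. -/
theorem nbhd_induced_max_degree_le_one {V : Type*} [Fintype V] (G : SimpleGraph V)
    (p : V → Fin 3) (hpart : ∀ u v : V, G.Adj u v → p u ≠ p v)
    (hfree : ¬ HasC4Multi G p) (x : V) (hx : p x = 0) :
    (∀ y : V, G.Adj x y → {z | G.Adj x z ∧ G.Adj y z}.ncard ≤ 1) ∧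
    {q : V × V | G.Adj x q.1 ∧ p q.1 = 1 ∧ G.Adj x q.2 ∧ p q.2 = 2 ∧ G.Adj q.1 q.2}.ncard ≤
      min {y | G.Adj x y ∧ p y = 1}.ncard {z | G.Adj x z ∧ p z = 2}.ncard := by
  have key : ∀ y : V, G.Adj x y → ({z | G.Adj x z ∧ G.Adj y z} : Set V).Subsingleton := by
    intro y hxy z1 hz1 z2 hz2
    by_contra hne
    apply hfree
    refine ⟨x, z1, y, z2, hz1.1.ne, hxy.ne, hz2.1.ne, hz1.2.ne', hne, hz2.2.ne,
      hz1.1, hz1.2.symm, hz2.2, hz2.1.symm, ?_⟩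
    intro i
    have h1 : (p y).val ≠ 0 := by
      intro h; exact hpart x y hxy (by rw [hx]; exact (Fin.ext h).symm)
    have h2 : (p z1).val ≠ 0 := by
      intro h; exact hpart x z1 hz1.1 (by rw [hx]; exact (Fin.ext h).symm)
    have h3 : (p z1).val ≠ (p y).val := fun h => hpart y z1 hz1.2 (Fin.ext h).symm
    have hi : i = 0 ∨ i = p y ∨ i = p z1 := by
      rcases Fin.eq_zero_or_eq_succ i with h | ⟨j, rfl⟩
      · exact Or.inl h
      · have := j.isLt
        have hy := (p y).isLt
        have hz := (p z1).isLt
        have : j.succ.val = (p y).val ∨ j.succ.val = (p z1).val := by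
          simp only [Fin.val_succ] at *; omega
        rcases this with h | h
        · exact Or.inr (Or.inl (Fin.ext h))
        · exact Or.inr (Or.inr (Fin.ext h))
    rcases hi with rfl | rfl | rfl
    · exact ⟨x, by simp, hx⟩
    · exact ⟨y, by simp, rfl⟩
    · exact ⟨z1, by simp, rfl⟩
  constructor
  · intro y hxy
    exact (Set.ncard_le_one (Set.toFinite _)).mpr (fun a ha b hb => key y hxy ha hb)
  · set S := {q : V × V | G.Adj x q.1 ∧ p q.1 = 1 ∧ G.Adj x q.2 ∧ p q.2 = 2 ∧ G.Adj q.1 q.2}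
    have hfin : ∀ s : Set (V × V), s.Finite := fun s => Set.toFinite s
    refine le_min ?_ ?_
    · apply Set.ncard_le_ncard_of_injOn (fun q => q.1)
      · intro q hq; exact ⟨hq.1, hq.2.1⟩
      · intro q1 hq1 q2 hq2 h
        have h' : q1.1 = q2.1 := h
        have hz : q1.2 = q2.2 := by
          apply key q1.1 hq1.1
          · exact ⟨hq1.2.2.1, hq1.2.2.2.2⟩
          · rw [h']; exact ⟨hq2.2.2.1, hq2.2.2.2.2⟩
        exact Prod.ext h' hz
    · apply Set.ncard_le_ncard_of_injOn (fun q => q.2)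
      · intro q hq; exact ⟨hq.2.2.1, hq.2.2.2.1⟩
      · intro q1 hq1 q2 hq2 h
        have h' : q1.2 = q2.2 := h
        have hy : q1.1 = q2.1 := by
          apply key q1.2 hq1.2.2.1
          · exact ⟨hq1.1, hq1.2.2.2.2.symm⟩
          · rw [h']; exact ⟨hq2.1, hq2.2.2.2.2.symm⟩
        exact Prod.ext hy h'
end

section
/- Let K_{n1,n2,n3} with n1 ≥ n2 ≥ n3 ≥ 1 be edge-colored. Suppose there exist two triangles T1 and T2 of K_{n1,n2,n3} sharing exactly one common vertex such that the six edges of T1 ∪ T2 receive pairwise distinct colors. Then the coloring contains a rainbow multipartite 4-cycle. -/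
lemma fin3_cases' (px py pz i : Fin 3) (h1 : px ≠ py) (h2 : px ≠ pz) (h3 : py ≠ pz) :
    i = px ∨ i = py ∨ i = pz := by revert px py pz i; decide

lemma fin3_cover {V : Type*} (p : V → Fin 3) (x y z w : V)
    (h1 : p x ≠ p y) (h2 : p x ≠ p z) (h3 : p y ≠ p z) :
    ∀ i : Fin 3, ∃ v ∈ ({x, y, z, w} : Set V), p v = i := by
  intro i
  rcases fin3_cases' (p x) (p y) (p z) i h1 h2 h3 with h|h|h
  · exact ⟨x, by simp, h.symm⟩
  · exact ⟨y, by simp, h.symm⟩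
  · exact ⟨z, by simp, h.symm⟩

lemma sym2_ne {V : Type*} {p1 p2 q1 q2 : V}
    (h1 : p1 ≠ q1 ∨ p2 ≠ q2) (h2 : p1 ≠ q2 ∨ p2 ≠ q1) : s(p1,p2) ≠ s(q1,q2) := by
  intro h
  rw [Sym2.eq_iff] at h
  rcases h with ⟨e1,e2⟩|⟨e1,e2⟩
  · rcases h1 with h|h
    exacts [h e1, h e2]
  · rcases h2 with h|h
    exacts [h e1, h e2]

set_option maxHeartbeats 1600000 in
lemma keyLemma (n1 n2 n3 : ℕ) (c : Sym2 (Fin n1 ⊕ Fin n2 ⊕ Fin n3) → ℕ)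
    (x u v u' v' : Fin n1 ⊕ Fin n2 ⊕ Fin n3)
    (axu : (triK n1 n2 n3).Adj x u) (auv : (triK n1 n2 n3).Adj u v)
    (axv : (triK n1 n2 n3).Adj x v) (axu' : (triK n1 n2 n3).Adj x u')
    (au'v' : (triK n1 n2 n3).Adj u' v') (axv' : (triK n1 n2 n3).Adj x v')
    (huu' : u ≠ u') (huv' : u ≠ v') (hvu' : v ≠ u') (hvv' : v ≠ v')
    (hcross : (triK n1 n2 n3).Adj u v')
    (hcol : ∀ p q : Sym2 (Fin n1 ⊕ Fin n2 ⊕ Fin n3),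
      p ∈ ({s(x,u), s(u,v), s(x,v), s(x,u'), s(u',v'), s(x,v')} : Set (Sym2 (Fin n1 ⊕ Fin n2 ⊕ Fin n3))) →
      q ∈ ({s(x,u), s(u,v), s(x,v), s(x,u'), s(u',v'), s(x,v')} : Set (Sym2 (Fin n1 ⊕ Fin n2 ⊕ Fin n3))) →
      p ≠ q → c p ≠ c q) :
    HasRainbowC4Multi (triK n1 n2 n3) triPart c := by
  have q1 : x ≠ u := axu.ne
  have q2 : u ≠ v := auv.ne
  have q3 : x ≠ v := axv.ne
  have q4 : x ≠ u' := axu'.ne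
  have q5 : u' ≠ v' := au'v'.ne
  have q6 : x ≠ v' := axv'.ne
  have m1 : s(x,u) ∈ ({s(x,u), s(u,v), s(x,v), s(x,u'), s(u',v'), s(x,v')} : Set (Sym2 (Fin n1 ⊕ Fin n2 ⊕ Fin n3))) := Set.mem_insert _ _
  have m2 : s(u,v) ∈ ({s(x,u), s(u,v), s(x,v), s(x,u'), s(u',v'), s(x,v')} : Set (Sym2 (Fin n1 ⊕ Fin n2 ⊕ Fin n3))) := Set.mem_insert_of_mem _ (Set.mem_insert _ _)
  have m3 : s(x,v) ∈ ({s(x,u), s(u,v), s(x,v), s(x,u'), s(u',v'), s(x,v')} : Set (Sym2 (Fin n1 ⊕ Fin n2 ⊕ Fin n3))) := Set.mem_insert_of_mem _ (Set.mem_insert_of_mem _ (Set.mem_insert _ _))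
  have m4 : s(x,u') ∈ ({s(x,u), s(u,v), s(x,v), s(x,u'), s(u',v'), s(x,v')} : Set (Sym2 (Fin n1 ⊕ Fin n2 ⊕ Fin n3))) := Set.mem_insert_of_mem _ (Set.mem_insert_of_mem _ (Set.mem_insert_of_mem _ (Set.mem_insert _ _)))
  have m5 : s(u',v') ∈ ({s(x,u), s(u,v), s(x,v), s(x,u'), s(u',v'), s(x,v')} : Set (Sym2 (Fin n1 ⊕ Fin n2 ⊕ Fin n3))) := Set.mem_insert_of_mem _ (Set.mem_insert_of_mem _ (Set.mem_insert_of_mem _ (Set.mem_insert_of_mem _ (Set.mem_insert _ _))))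
  have m6 : s(x,v') ∈ ({s(x,u), s(u,v), s(x,v), s(x,u'), s(u',v'), s(x,v')} : Set (Sym2 (Fin n1 ⊕ Fin n2 ⊕ Fin n3))) := Set.mem_insert_of_mem _ (Set.mem_insert_of_mem _ (Set.mem_insert_of_mem _ (Set.mem_insert_of_mem _ (Set.mem_insert_of_mem _ rfl))))
  have c12 : c s(x,u) ≠ c s(u,v) := hcol _ _ m1 m2 (sym2_ne (Or.inl q1) (Or.inl q3))
  have c13 : c s(x,u) ≠ c s(x,v) := hcol _ _ m1 m3 (sym2_ne (Or.inr q2) (Or.inl q3))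
  have c14 : c s(x,u) ≠ c s(x,u') := hcol _ _ m1 m4 (sym2_ne (Or.inr huu') (Or.inl q4))
  have c15 : c s(x,u) ≠ c s(u',v') := hcol _ _ m1 m5 (sym2_ne (Or.inl q4) (Or.inl q6))
  have c16 : c s(x,u) ≠ c s(x,v') := hcol _ _ m1 m6 (sym2_ne (Or.inr huv') (Or.inl q6))
  have c23 : c s(u,v) ≠ c s(x,v) := hcol _ _ m2 m3 (sym2_ne (Or.inl q1.symm) (Or.inl q2))
  have c24 : c s(u,v) ≠ c s(x,u') := hcol _ _ m2 m4 (sym2_ne (Or.inl q1.symm) (Or.inl huu'))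
  have c25 : c s(u,v) ≠ c s(u',v') := hcol _ _ m2 m5 (sym2_ne (Or.inl huu') (Or.inl huv'))
  have c26 : c s(u,v) ≠ c s(x,v') := hcol _ _ m2 m6 (sym2_ne (Or.inl q1.symm) (Or.inl huv'))
  have c34 : c s(x,v) ≠ c s(x,u') := hcol _ _ m3 m4 (sym2_ne (Or.inr hvu') (Or.inl q4))
  have c35 : c s(x,v) ≠ c s(u',v') := hcol _ _ m3 m5 (sym2_ne (Or.inl q4) (Or.inl q6))
  have c36 : c s(x,v) ≠ c s(x,v') := hcol _ _ m3 m6 (sym2_ne (Or.inr hvv') (Or.inl q6))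
  have c45 : c s(x,u') ≠ c s(u',v') := hcol _ _ m4 m5 (sym2_ne (Or.inl q4) (Or.inl q6))
  have c46 : c s(x,u') ≠ c s(x,v') := hcol _ _ m4 m6 (sym2_ne (Or.inr q5) (Or.inl q6))
  have c56 : c s(u',v') ≠ c s(x,v') := hcol _ _ m5 m6 (sym2_ne (Or.inl q4.symm) (Or.inl q5))
  by_cases hX : c s(u,v') = c s(x,v) ∨ c s(u,v') = c s(u,v) ∨ c s(u,v') = c s(x,v')
  · rcases hX with h|h|h <;>
    · refine ⟨x, u', v', u, q4, q6, q1, q5, huu'.symm, huv'.symm, axu', au'v', hcross.symm,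
        axu.symm, fin3_cover triPart x u' v' u axu' axv' au'v', ?_⟩
      rw [show s(v',u) = s(u,v') from Sym2.eq_swap, show s(u,x) = s(x,u) from Sym2.eq_swap]
      simp only [List.pairwise_cons, List.mem_cons, List.not_mem_nil, List.mem_singleton,
        forall_eq_or_imp, forall_eq, ne_eq, List.Pairwise.nil, and_true,
        IsEmpty.forall_iff, implies_true]
      omega
  · push_neg at hX
    obtain ⟨hX1, hX2, hX3⟩ := hX
    refine ⟨x, v, u, v', q3, q1, q6, q2.symm, hvv', huv', axv, auv.symm, hcross, axv'.symm,
      fin3_cover triPart x v u v' axv axu auv.symm, ?_⟩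
    rw [show s(v,u) = s(u,v) from Sym2.eq_swap, show s(v',x) = s(x,v') from Sym2.eq_swap]
    simp only [List.pairwise_cons, List.mem_cons, List.not_mem_nil, List.mem_singleton,
      forall_eq_or_imp, forall_eq, ne_eq, List.Pairwise.nil, and_true,
      IsEmpty.forall_iff, implies_true]
    omega

lemma keyLemma2 (n1 n2 n3 : ℕ) (c : Sym2 (Fin n1 ⊕ Fin n2 ⊕ Fin n3) → ℕ)
    (x u v u' v' : Fin n1 ⊕ Fin n2 ⊕ Fin n3)
    (axu : (triK n1 n2 n3).Adj x u) (auv : (triK n1 n2 n3).Adj u v)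
    (axv : (triK n1 n2 n3).Adj x v) (axu' : (triK n1 n2 n3).Adj x u')
    (au'v' : (triK n1 n2 n3).Adj u' v') (axv' : (triK n1 n2 n3).Adj x v')
    (huu' : u ≠ u') (huv' : u ≠ v') (hvu' : v ≠ u') (hvv' : v ≠ v')
    (hcol : ∀ p q : Sym2 (Fin n1 ⊕ Fin n2 ⊕ Fin n3),
      p ∈ ({s(x,u), s(u,v), s(x,v), s(x,u'), s(u',v'), s(x,v')} : Set (Sym2 (Fin n1 ⊕ Fin n2 ⊕ Fin n3))) →
      q ∈ ({s(x,u), s(u,v), s(x,v), s(x,u'), s(u',v'), s(x,v')} : Set (Sym2 (Fin n1 ⊕ Fin n2 ⊕ Fin n3))) →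
      p ≠ q → c p ≠ c q) :
    HasRainbowC4Multi (triK n1 n2 n3) triPart c := by
  by_cases h : triPart u = triPart v'
  · refine keyLemma n1 n2 n3 c x u v v' u' axu auv axv axv' au'v'.symm axu'
      huv' huu' hvv' hvu'
      (show (triK n1 n2 n3).Adj u u' from fun he => au'v' (he.symm.trans h)) ?_
    intro p q hp hq hne
    refine hcol p q ?_ ?_ hne
    · revert hp; simp only [Set.mem_insert_iff, Set.mem_singleton_iff]
      rintro (rfl|rfl|rfl|rfl|rfl|rfl) <;> simp [Sym2.eq_iff]
    · revert hq; simp only [Set.mem_insert_iff, Set.mem_singleton_iff]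
      rintro (rfl|rfl|rfl|rfl|rfl|rfl) <;> simp [Sym2.eq_iff]
  · exact keyLemma n1 n2 n3 c x u v u' v' axu auv axv axu' au'v' axv'
      huu' huv' hvu' hvv' (show (triK n1 n2 n3).Adj u v' from h) hcol

set_option maxHeartbeats 1600000 in
/-- if an edge-coloring of `K_{n1,n2,n3}` contains two triangles sharing
exactly one common vertex whose six edges receive pairwise distinct colors, then it
contains a rainbow multipartite 4-cycle. -/
theorem rainbow_of_bowtie (n1 n2 n3 : ℕ) (h12 : n2 ≤ n1) (h23 : n3 ≤ n2) (h3 : 1 ≤ n3)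
    (c : Sym2 (Fin n1 ⊕ Fin n2 ⊕ Fin n3) → ℕ)
    (a b d a' b' d' : Fin n1 ⊕ Fin n2 ⊕ Fin n3)
    (hT1 : (triK n1 n2 n3).Adj a b ∧ (triK n1 n2 n3).Adj b d ∧ (triK n1 n2 n3).Adj a d)
    (hT2 : (triK n1 n2 n3).Adj a' b' ∧ (triK n1 n2 n3).Adj b' d' ∧ (triK n1 n2 n3).Adj a' d')
    (hshare : (({a, b, d} : Set (Fin n1 ⊕ Fin n2 ⊕ Fin n3)) ∩ {a', b', d'}).ncard = 1)
    (hrb : List.Pairwise (· ≠ ·)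
      [c s(a, b), c s(b, d), c s(a, d), c s(a', b'), c s(b', d'), c s(a', d')]) :
    HasRainbowC4Multi (triK n1 n2 n3) triPart c := by
  obtain ⟨hab, hbd, had⟩ := hT1
  obtain ⟨hab', hbd', had'⟩ := hT2
  rw [Set.ncard_eq_one] at hshare
  obtain ⟨x0, hx0⟩ := hshare
  have huniq : ∀ y, y ∈ ({a, b, d} : Set (Fin n1 ⊕ Fin n2 ⊕ Fin n3)) →
      y ∈ ({a', b', d'} : Set (Fin n1 ⊕ Fin n2 ⊕ Fin n3)) → y = x0 := by
    intro y hy hy'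
    have hm : y ∈ ({a, b, d} : Set (Fin n1 ⊕ Fin n2 ⊕ Fin n3)) ∩ {a', b', d'} := ⟨hy, hy'⟩
    rw [hx0] at hm
    exact hm
  have hx0m : x0 ∈ ({a, b, d} : Set (Fin n1 ⊕ Fin n2 ⊕ Fin n3)) ∩ {a', b', d'} := by
    rw [hx0]; exact rfl
  obtain ⟨h1m, h2m⟩ := hx0m
  simp only [List.pairwise_cons, List.mem_cons, List.not_mem_nil, List.mem_singleton,
    forall_eq_or_imp, forall_eq, ne_eq, List.Pairwise.nil, and_true,
    IsEmpty.forall_iff, implies_true] at hrb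
  have HC : ∀ p q : Sym2 (Fin n1 ⊕ Fin n2 ⊕ Fin n3),
      p ∈ ({s(a,b), s(b,d), s(a,d), s(a',b'), s(b',d'), s(a',d')} :
        Set (Sym2 (Fin n1 ⊕ Fin n2 ⊕ Fin n3))) →
      q ∈ ({s(a,b), s(b,d), s(a,d), s(a',b'), s(b',d'), s(a',d')} :
        Set (Sym2 (Fin n1 ⊕ Fin n2 ⊕ Fin n3))) →
      p ≠ q → c p ≠ c q := by
    intro p q hp hq hne
    simp only [Set.mem_insert_iff, Set.mem_singleton_iff] at hp hq
    rcases hp with rfl|rfl|rfl|rfl|rfl|rfl <;> rcases hq with rfl|rfl|rfl|rfl|rfl|rfl <;>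
      first
      | omega
      | exact absurd rfl hne
  clear hx0
  simp only [Set.mem_insert_iff, Set.mem_singleton_iff] at h1m h2m
  rcases h1m with h1 | h1 | h1 <;> rcases h2m with h2 | h2 | h2
  · -- x0 = a, x0 = a'
    have e : a' = a := h2.symm.trans h1
    rw [e] at hab' had' HC huniq
    rw [h1] at huniq
    have w1 : b ≠ b' := fun h => hab.ne (huniq b (by simp) (by simp [h])).symm
    have w2 : b ≠ d' := fun h => hab.ne (huniq b (by simp) (by simp [h])).symm
    have w3 : d ≠ b' := fun h => had.ne (huniq d (by simp) (by simp [h])).symm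
    have w4 : d ≠ d' := fun h => had.ne (huniq d (by simp) (by simp [h])).symm
    refine keyLemma2 n1 n2 n3 c a b d b' d' hab hbd had hab' hbd' had' w1 w2 w3 w4 ?_
    intro p q hp hq hne
    refine HC p q ?_ ?_ hne
    · revert hp; simp only [Set.mem_insert_iff, Set.mem_singleton_iff]
      rintro (rfl|rfl|rfl|rfl|rfl|rfl) <;> simp [Sym2.eq_iff]
    · revert hq; simp only [Set.mem_insert_iff, Set.mem_singleton_iff]
      rintro (rfl|rfl|rfl|rfl|rfl|rfl) <;> simp [Sym2.eq_iff]
  · -- x0 = a, x0 = b'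
    have e : b' = a := h2.symm.trans h1
    rw [e] at hab' hbd' HC huniq
    rw [h1] at huniq
    have w1 : b ≠ a' := fun h => hab.ne (huniq b (by simp) (by simp [h])).symm
    have w2 : b ≠ d' := fun h => hab.ne (huniq b (by simp) (by simp [h])).symm
    have w3 : d ≠ a' := fun h => had.ne (huniq d (by simp) (by simp [h])).symm
    have w4 : d ≠ d' := fun h => had.ne (huniq d (by simp) (by simp [h])).symm
    refine keyLemma2 n1 n2 n3 c a b d a' d' hab hbd had hab'.symm had' hbd' w1 w2 w3 w4 ?_
    intro p q hp hq hne
    refine HC p q ?_ ?_ hne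
    · revert hp; simp only [Set.mem_insert_iff, Set.mem_singleton_iff]
      rintro (rfl|rfl|rfl|rfl|rfl|rfl) <;> simp [Sym2.eq_iff]
    · revert hq; simp only [Set.mem_insert_iff, Set.mem_singleton_iff]
      rintro (rfl|rfl|rfl|rfl|rfl|rfl) <;> simp [Sym2.eq_iff]
  · -- x0 = a, x0 = d'
    have e : d' = a := h2.symm.trans h1
    rw [e] at had' hbd' HC huniq
    rw [h1] at huniq
    have w1 : b ≠ a' := fun h => hab.ne (huniq b (by simp) (by simp [h])).symm
    have w2 : b ≠ b' := fun h => hab.ne (huniq b (by simp) (by simp [h])).symm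
    have w3 : d ≠ a' := fun h => had.ne (huniq d (by simp) (by simp [h])).symm
    have w4 : d ≠ b' := fun h => had.ne (huniq d (by simp) (by simp [h])).symm
    refine keyLemma2 n1 n2 n3 c a b d a' b' hab hbd had had'.symm hab' hbd'.symm w1 w2 w3 w4 ?_
    intro p q hp hq hne
    refine HC p q ?_ ?_ hne
    · revert hp; simp only [Set.mem_insert_iff, Set.mem_singleton_iff]
      rintro (rfl|rfl|rfl|rfl|rfl|rfl) <;> simp [Sym2.eq_iff]
    · revert hq; simp only [Set.mem_insert_iff, Set.mem_singleton_iff]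
      rintro (rfl|rfl|rfl|rfl|rfl|rfl) <;> simp [Sym2.eq_iff]
  · -- x0 = b, x0 = a'
    have e : a' = b := h2.symm.trans h1
    rw [e] at hab' had' HC huniq
    rw [h1] at huniq
    have w1 : a ≠ b' := fun h => hab.ne (huniq a (by simp) (by simp [h]))
    have w2 : a ≠ d' := fun h => hab.ne (huniq a (by simp) (by simp [h]))
    have w3 : d ≠ b' := fun h => hbd.ne (huniq d (by simp) (by simp [h])).symm
    have w4 : d ≠ d' := fun h => hbd.ne (huniq d (by simp) (by simp [h])).symm
    refine keyLemma2 n1 n2 n3 c b a d b' d' hab.symm had hbd hab' hbd' had' w1 w2 w3 w4 ?_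
    intro p q hp hq hne
    refine HC p q ?_ ?_ hne
    · revert hp; simp only [Set.mem_insert_iff, Set.mem_singleton_iff]
      rintro (rfl|rfl|rfl|rfl|rfl|rfl) <;> simp [Sym2.eq_iff]
    · revert hq; simp only [Set.mem_insert_iff, Set.mem_singleton_iff]
      rintro (rfl|rfl|rfl|rfl|rfl|rfl) <;> simp [Sym2.eq_iff]
  · -- x0 = b, x0 = b'
    have e : b' = b := h2.symm.trans h1
    rw [e] at hab' hbd' HC huniq
    rw [h1] at huniq
    have w1 : a ≠ a' := fun h => hab.ne (huniq a (by simp) (by simp [h]))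
    have w2 : a ≠ d' := fun h => hab.ne (huniq a (by simp) (by simp [h]))
    have w3 : d ≠ a' := fun h => hbd.ne (huniq d (by simp) (by simp [h])).symm
    have w4 : d ≠ d' := fun h => hbd.ne (huniq d (by simp) (by simp [h])).symm
    refine keyLemma2 n1 n2 n3 c b a d a' d' hab.symm had hbd hab'.symm had' hbd' w1 w2 w3 w4 ?_
    intro p q hp hq hne
    refine HC p q ?_ ?_ hne
    · revert hp; simp only [Set.mem_insert_iff, Set.mem_singleton_iff]
      rintro (rfl|rfl|rfl|rfl|rfl|rfl) <;> simp [Sym2.eq_iff]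
    · revert hq; simp only [Set.mem_insert_iff, Set.mem_singleton_iff]
      rintro (rfl|rfl|rfl|rfl|rfl|rfl) <;> simp [Sym2.eq_iff]
  · -- x0 = b, x0 = d'
    have e : d' = b := h2.symm.trans h1
    rw [e] at had' hbd' HC huniq
    rw [h1] at huniq
    have w1 : a ≠ a' := fun h => hab.ne (huniq a (by simp) (by simp [h]))
    have w2 : a ≠ b' := fun h => hab.ne (huniq a (by simp) (by simp [h]))
    have w3 : d ≠ a' := fun h => hbd.ne (huniq d (by simp) (by simp [h])).symm
    have w4 : d ≠ b' := fun h => hbd.ne (huniq d (by simp) (by simp [h])).symm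
    refine keyLemma2 n1 n2 n3 c b a d a' b' hab.symm had hbd had'.symm hab' hbd'.symm w1 w2 w3 w4 ?_
    intro p q hp hq hne
    refine HC p q ?_ ?_ hne
    · revert hp; simp only [Set.mem_insert_iff, Set.mem_singleton_iff]
      rintro (rfl|rfl|rfl|rfl|rfl|rfl) <;> simp [Sym2.eq_iff]
    · revert hq; simp only [Set.mem_insert_iff, Set.mem_singleton_iff]
      rintro (rfl|rfl|rfl|rfl|rfl|rfl) <;> simp [Sym2.eq_iff]
  · -- x0 = d, x0 = a'
    have e : a' = d := h2.symm.trans h1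
    rw [e] at hab' had' HC huniq
    rw [h1] at huniq
    have w1 : a ≠ b' := fun h => had.ne (huniq a (by simp) (by simp [h]))
    have w2 : a ≠ d' := fun h => had.ne (huniq a (by simp) (by simp [h]))
    have w3 : b ≠ b' := fun h => hbd.ne (huniq b (by simp) (by simp [h]))
    have w4 : b ≠ d' := fun h => hbd.ne (huniq b (by simp) (by simp [h]))
    refine keyLemma2 n1 n2 n3 c d a b b' d' had.symm hab hbd.symm hab' hbd' had' w1 w2 w3 w4 ?_
    intro p q hp hq hne
    refine HC p q ?_ ?_ hne
    · revert hp; simp only [Set.mem_insert_iff, Set.mem_singleton_iff]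
      rintro (rfl|rfl|rfl|rfl|rfl|rfl) <;> simp [Sym2.eq_iff]
    · revert hq; simp only [Set.mem_insert_iff, Set.mem_singleton_iff]
      rintro (rfl|rfl|rfl|rfl|rfl|rfl) <;> simp [Sym2.eq_iff]
  · -- x0 = d, x0 = b'
    have e : b' = d := h2.symm.trans h1
    rw [e] at hab' hbd' HC huniq
    rw [h1] at huniq
    have w1 : a ≠ a' := fun h => had.ne (huniq a (by simp) (by simp [h]))
    have w2 : a ≠ d' := fun h => had.ne (huniq a (by simp) (by simp [h]))
    have w3 : b ≠ a' := fun h => hbd.ne (huniq b (by simp) (by simp [h]))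
    have w4 : b ≠ d' := fun h => hbd.ne (huniq b (by simp) (by simp [h]))
    refine keyLemma2 n1 n2 n3 c d a b a' d' had.symm hab hbd.symm hab'.symm had' hbd' w1 w2 w3 w4 ?_
    intro p q hp hq hne
    refine HC p q ?_ ?_ hne
    · revert hp; simp only [Set.mem_insert_iff, Set.mem_singleton_iff]
      rintro (rfl|rfl|rfl|rfl|rfl|rfl) <;> simp [Sym2.eq_iff]
    · revert hq; simp only [Set.mem_insert_iff, Set.mem_singleton_iff]
      rintro (rfl|rfl|rfl|rfl|rfl|rfl) <;> simp [Sym2.eq_iff]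
  · -- x0 = d, x0 = d'
    have e : d' = d := h2.symm.trans h1
    rw [e] at had' hbd' HC huniq
    rw [h1] at huniq
    have w1 : a ≠ a' := fun h => had.ne (huniq a (by simp) (by simp [h]))
    have w2 : a ≠ b' := fun h => had.ne (huniq a (by simp) (by simp [h]))
    have w3 : b ≠ a' := fun h => hbd.ne (huniq b (by simp) (by simp [h]))
    have w4 : b ≠ b' := fun h => hbd.ne (huniq b (by simp) (by simp [h]))
    refine keyLemma2 n1 n2 n3 c d a b a' b' had.symm hab hbd.symm had'.symm hab' hbd'.symm w1 w2 w3 w4 ?_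
    intro p q hp hq hne
    refine HC p q ?_ ?_ hne
    · revert hp; simp only [Set.mem_insert_iff, Set.mem_singleton_iff]
      rintro (rfl|rfl|rfl|rfl|rfl|rfl) <;> simp [Sym2.eq_iff]
    · revert hq; simp only [Set.mem_insert_iff, Set.mem_singleton_iff]
      rintro (rfl|rfl|rfl|rfl|rfl|rfl) <;> simp [Sym2.eq_iff]
end

section
/- Let K_{n1,n2,n3} with n1 ≥ n2 ≥ n3 ≥ 1 be edge-colored. Suppose there is a 6-cycle C in K_{n1,n2,n3} whose vertex set meets all three parts, whose six edges receive pairwise distinct colors, and which is non-cyclic, i.e., some vertex of C has both of its neighbors on C lying in the same part. Then the coloring contains a rainbow multipartite 4-cycle. -/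
lemma key6 : ∀ p : Fin 6 → Fin 3,
    (∀ j, p j ≠ p (j+1)) → (∀ i, ∃ j, p j = i) → (∃ j, p (j-1) = p (j+1)) →
    ∃ j, p j ≠ p (j+3) ∧
      (∀ i, p j = i ∨ p (j+1) = i ∨ p (j+2) = i ∨ p (j+3) = i) ∧
      (∀ i, p (j+3) = i ∨ p (j+4) = i ∨ p (j+5) = i ∨ p j = i) := by
  set_option maxRecDepth 10000 in decide

/-- if an edge-coloring of `K_{n1,n2,n3}` contains a rainbow non-cyclic
multipartite 6-cycle, then it contains a rainbow multipartite 4-cycle. -/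
theorem rainbow_of_noncyclic_C6 (n1 n2 n3 : ℕ) (h12 : n2 ≤ n1) (h23 : n3 ≤ n2) (h3 : 1 ≤ n3)
    (c : Sym2 (Fin n1 ⊕ Fin n2 ⊕ Fin n3) → ℕ)
    (v : Fin 6 → Fin n1 ⊕ Fin n2 ⊕ Fin n3)
    (hinj : Function.Injective v)
    (hadj : ∀ j : Fin 6, (triK n1 n2 n3).Adj (v j) (v (j + 1)))
    (hmulti : ∀ i : Fin 3, ∃ j : Fin 6, triPart (v j) = i)
    (hrb : ∀ j k : Fin 6, c s(v j, v (j + 1)) = c s(v k, v (k + 1)) → j = k)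
    (hnc : ∃ j : Fin 6, triPart (v (j - 1)) = triPart (v (j + 1))) :
    HasRainbowC4Multi (triK n1 n2 n3) triPart c := by
  obtain ⟨j, hchord, hm1, hm2⟩ := key6 (fun k => triPart (v k)) (fun k => hadj k)
    (fun i => hmulti i) hnc
  have e1 : j + 1 + 1 = j + 2 := by omega
  have e2 : j + 2 + 1 = j + 3 := by omega
  have e3 : j + 3 + 1 = j + 4 := by omega
  have e4 : j + 4 + 1 = j + 5 := by omega
  have e5 : j + 5 + 1 = j := by omega
  have hne : ∀ a b : Fin 6, a ≠ b → v a ≠ v b := fun a b h e => h (hinj e)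
  have hcol : ∀ a b : Fin 6, a ≠ b → c s(v a, v (a+1)) ≠ c s(v b, v (b+1)) :=
    fun a b h e => h (hrb a b e)
  have q1 : c s(v (j+1), v (j+2)) = c s(v (j+1), v (j+1+1)) := by rw [e1]
  have q2 : c s(v (j+2), v (j+3)) = c s(v (j+2), v (j+2+1)) := by rw [e2]
  have q3 : c s(v (j+3), v (j+4)) = c s(v (j+3), v (j+3+1)) := by rw [e3]
  have q4 : c s(v (j+4), v (j+5)) = c s(v (j+4), v (j+4+1)) := by rw [e4]
  have q5 : c s(v (j+5), v j) = c s(v (j+5), v (j+5+1)) := by rw [e5]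
  have adjbd := hadj (j+1); rw [e1] at adjbd
  have adjde := hadj (j+2); rw [e2] at adjde
  have adjab' := hadj (j+3); rw [e3] at adjab'
  have adjbd' := hadj (j+4); rw [e4] at adjbd'
  have adjde' := hadj (j+5); rw [e5] at adjde'
  by_cases hx : c s(v j, v (j+3)) = c s(v j, v (j+1)) ∨
      c s(v j, v (j+3)) = c s(v (j+1), v (j+2)) ∨
      c s(v j, v (j+3)) = c s(v (j+2), v (j+3))
  · -- second 4-cycle: v(j+3), v(j+4), v(j+5), v j
    have hxne : ∀ b : Fin 6, b ≠ j → b ≠ j+1 → b ≠ j+2 →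
        c s(v j, v (j+3)) ≠ c s(v b, v (b+1)) := by
      intro b hb0 hb1 hb2 he
      rcases hx with h | h | h
      · exact hcol b j hb0 (he.symm.trans h)
      · exact hcol b (j+1) hb1 (he.symm.trans (h.trans q1))
      · exact hcol b (j+2) hb2 (he.symm.trans (h.trans q2))
    refine ⟨v (j+3), v (j+4), v (j+5), v j,
      hne _ _ (by omega), hne _ _ (by omega), hne _ _ (by omega),
      hne _ _ (by omega), hne _ _ (by omega), hne _ _ (by omega),
      adjab', adjbd', adjde', hchord, ?_, ?_⟩
    · intro i
      rcases hm2 i with h | h | h | h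
      · exact ⟨v (j+3), by simp, h⟩
      · exact ⟨v (j+4), by simp, h⟩
      · exact ⟨v (j+5), by simp, h⟩
      · exact ⟨v j, by simp, h⟩
    · have hs : s(v j, v (j+3)) = s(v (j+3), v j) := Sym2.eq_swap
      refine List.Pairwise.cons ?_ (List.Pairwise.cons ?_
        (List.Pairwise.cons ?_ (List.pairwise_singleton _ _)))
      all_goals
        intro y hy
        simp only [List.mem_cons, List.not_mem_nil, or_false] at hy
      · rcases hy with rfl | rfl | rfl
        · rw [q3, q4]; exact hcol (j+3) (j+4) (by omega)
        · rw [q3, q5]; exact hcol (j+3) (j+5) (by omega)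
        · rw [q3]; exact fun h => hxne (j+3) (by omega) (by omega) (by omega) h.symm
      · rcases hy with rfl | rfl
        · rw [q4, q5]; exact hcol (j+4) (j+5) (by omega)
        · rw [q4]; exact fun h => hxne (j+4) (by omega) (by omega) (by omega) h.symm
      · rcases hy with rfl
        rw [q5]; exact fun h => hxne (j+5) (by omega) (by omega) (by omega) h.symm
  · push_neg at hx
    obtain ⟨hx1, hx2, hx3⟩ := hx
    refine ⟨v j, v (j+1), v (j+2), v (j+3),
      hne _ _ (by omega), hne _ _ (by omega), hne _ _ (by omega),
      hne _ _ (by omega), hne _ _ (by omega), hne _ _ (by omega),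
      hadj j, adjbd, adjde, hchord.symm, ?_, ?_⟩
    · intro i
      rcases hm1 i with h | h | h | h
      · exact ⟨v j, by simp, h⟩
      · exact ⟨v (j+1), by simp, h⟩
      · exact ⟨v (j+2), by simp, h⟩
      · exact ⟨v (j+3), by simp, h⟩
    · have hs : s(v (j+3), v j) = s(v j, v (j+3)) := Sym2.eq_swap
      refine List.Pairwise.cons ?_ (List.Pairwise.cons ?_
        (List.Pairwise.cons ?_ (List.pairwise_singleton _ _)))
      all_goals
        intro y hy
        simp only [List.mem_cons, List.not_mem_nil, or_false] at hy
      · rcases hy with rfl | rfl | rfl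
        · rw [q1]; exact hcol j (j+1) (by omega)
        · rw [q2]; exact hcol j (j+2) (by omega)
        · rw [hs]; exact fun h => hx1 h.symm
      · rcases hy with rfl | rfl
        · rw [q1, q2]; exact hcol (j+1) (j+2) (by omega)
        · rw [hs]; exact fun h => hx2 h.symm
      · rcases hy with rfl
        rw [hs]; exact fun h => hx3 h.symm
end

section
/- Let G be a 3-partite graph that contains no multipartite 4-cycle, and suppose G contains two vertex-disjoint triangles T1 and T2. Then every vertex v of G not belonging to V(T1) ∪ V(T2) has at most 2 neighbors in V(T1) ∪ V(T2). -/
lemma key_c4 {V : Type*} (G : SimpleGraph V) (p : V → Fin 3)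
    (hpart : ∀ u v : V, G.Adj u v → p u ≠ p v)
    (hfree : ¬ HasC4Multi G p)
    (v x y z : V) (hxy : G.Adj x y) (hxz : G.Adj x z) (hyz : G.Adj y z)
    (hvx : G.Adj v x) (hvy : G.Adj v y) (hvz : v ≠ z) : False := by
  apply hfree
  have h1 := hpart x y hxy
  have h2 := hpart x z hxz
  have h3 := hpart y z hyz
  refine ⟨v, x, z, y, hvx.ne, hvz, hvy.ne, hxz.ne, hxy.ne, fun h => hyz.ne h.symm,
    hvx, hxz, hyz.symm, hvy.symm, ?_⟩
  intro i
  have hix : i = p x ∨ i = p z ∨ i = p y := by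
    simp only [Fin.ext_iff] at h1 h2 h3 ⊢
    have := (p x).isLt; have := (p y).isLt; have := (p z).isLt; have := i.isLt
    omega
  rcases hix with h | h | h
  · exact ⟨x, by simp, h.symm⟩
  · exact ⟨z, by simp, h.symm⟩
  · exact ⟨y, by simp, h.symm⟩

lemma two_in_tri {V : Type*} (G : SimpleGraph V) (p : V → Fin 3)
    (hpart : ∀ u v : V, G.Adj u v → p u ≠ p v)
    (hfree : ¬ HasC4Multi G p)
    (v x y z : V) (hxy : G.Adj x y) (hyz : G.Adj y z) (hxz : G.Adj x z)
    (hvx : v ≠ x) (hvy : v ≠ y) (hvz : v ≠ z)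
    (u w : V) (hu : u = x ∨ u = y ∨ u = z) (hw : w = x ∨ w = y ∨ w = z)
    (hne : u ≠ w) (hau : G.Adj v u) (haw : G.Adj v w) : False := by
  rcases hu with h | h | h <;> rcases hw with h' | h' | h' <;>
    rw [h] at hau hne <;> rw [h'] at haw hne
  · exact hne rfl
  · exact key_c4 G p hpart hfree v x y z hxy hxz hyz hau haw hvz
  · exact key_c4 G p hpart hfree v x z y hxz hxy hyz.symm hau haw hvy
  · exact key_c4 G p hpart hfree v y x z hxy.symm hyz hxz hau haw hvz
  · exact hne rfl
  · exact key_c4 G p hpart hfree v y z x hyz hxy.symm hxz.symm hau haw hvx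
  · exact key_c4 G p hpart hfree v z x y hxz.symm hyz.symm hxy hau haw hvy
  · exact key_c4 G p hpart hfree v z y x hyz.symm hxz.symm hxy.symm hau haw hvx
  · exact hne rfl

/-- in a `C4^multi`-free 3-partite graph containing two vertex-disjoint
triangles, every vertex outside the two triangles has at most 2 neighbors among their
six vertices. -/
theorem claim3 {V : Type*} [Fintype V] (G : SimpleGraph V) (p : V → Fin 3)
    (hpart : ∀ u v : V, G.Adj u v → p u ≠ p v)
    (hfree : ¬ HasC4Multi G p)
    (a b d a' b' d' : V)
    (hT1 : G.Adj a b ∧ G.Adj b d ∧ G.Adj a d)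
    (hT2 : G.Adj a' b' ∧ G.Adj b' d' ∧ G.Adj a' d')
    (hdisj : (({a, b, d} : Set V) ∩ {a', b', d'}) = ∅)
    (v : V) (hv : v ∉ ({a, b, d, a', b', d'} : Set V)) :
    {u ∈ ({a, b, d, a', b', d'} : Set V) | G.Adj v u}.ncard ≤ 2 := by
  classical
  simp only [Set.mem_insert_iff, Set.mem_singleton_iff, not_or] at hv
  obtain ⟨hva, hvb, hvd, hva', hvb', hvd'⟩ := hv
  set S1 : Set V := {u ∈ ({a, b, d} : Set V) | G.Adj v u} with hS1
  set S2 : Set V := {u ∈ ({a', b', d'} : Set V) | G.Adj v u} with hS2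
  have hsplit : {u ∈ ({a, b, d, a', b', d'} : Set V) | G.Adj v u} = S1 ∪ S2 := by
    ext u
    simp only [hS1, hS2, Set.mem_union, Set.mem_setOf_eq, Set.mem_insert_iff,
      Set.mem_singleton_iff]
    tauto
  rw [hsplit]
  have h1 : S1.ncard ≤ 1 := by
    rw [Set.ncard_le_one (Set.toFinite _)]
    rintro u ⟨hu, hau⟩ w ⟨hw, haw⟩
    by_contra hne
    simp only [Set.mem_insert_iff, Set.mem_singleton_iff] at hu hw
    exact two_in_tri G p hpart hfree v a b d hT1.1 hT1.2.1 hT1.2.2 hva hvb hvd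
      u w hu hw hne hau haw
  have h2 : S2.ncard ≤ 1 := by
    rw [Set.ncard_le_one (Set.toFinite _)]
    rintro u ⟨hu, hau⟩ w ⟨hw, haw⟩
    by_contra hne
    simp only [Set.mem_insert_iff, Set.mem_singleton_iff] at hu hw
    exact two_in_tri G p hpart hfree v a' b' d' hT2.1 hT2.2.1 hT2.2.2 hva' hvb' hvd'
      u w hu hw hne hau haw
  calc (S1 ∪ S2).ncard ≤ S1.ncard + S2.ncard :=
        Set.ncard_union_le S1 S2
    _ ≤ 2 := by omega
end

section
/- For integers n1 ≥ n2 ≥ n3 ≥ 1, let G be a subgraph of K_{n1,n2,n3} that contains no multipartite 4-cycle and satisfies e(G) ≥ n1·n2 + n3 + 2. Then G contains two distinct triangles that share at most one common vertex. -/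
set_option linter.unusedSectionVars false

namespace TwoTriAux
open Finset
open scoped Classical

variable {V : Type*} [Fintype V] [DecidableEq V]

noncomputable def dg (H : SimpleGraph V) (X : Finset V) (v : V) : ℕ :=
  (X.filter fun u => H.Adj v u).card

noncomputable def cnt (H : SimpleGraph V) (X Y : Finset V) : ℕ :=
  ∑ x ∈ X, dg H Y x

noncomputable def E3 (H : SimpleGraph V) (A B C : Finset V) : ℕ :=
  cnt H A B + cnt H B C + cnt H A C

lemma dg_le_card (H : SimpleGraph V) (X : Finset V) (v : V) : dg H X v ≤ X.card :=
  Finset.card_filter_le _ _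

lemma dg_empty (H : SimpleGraph V) (v : V) : dg H ∅ v = 0 := by
  simp [dg]

lemma adj_of_dg_pos {H : SimpleGraph V} {X : Finset V} {v u : V}
    (hu : u ∈ X) (h : H.Adj v u) : 1 ≤ dg H X v := by
  have : u ∈ X.filter fun u => H.Adj v u := by simp [hu, h]
  have h2 := Finset.card_pos.mpr ⟨u, this⟩
  unfold dg
  omega

lemma not_adj_of_dg_zero {H : SimpleGraph V} {X : Finset V} {v u : V}
    (hu : u ∈ X) (h : dg H X v = 0) : ¬ H.Adj v u := by
  intro hadj
  have := adj_of_dg_pos hu hadj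
  omega

lemma dg_as_sum (H : SimpleGraph V) (X : Finset V) (v : V) :
    dg H X v = ∑ x ∈ X, if H.Adj v x then 1 else 0 := by
  classical
  rw [dg, Finset.card_filter]

lemma cnt_comm (H : SimpleGraph V) (X Y : Finset V) : cnt H X Y = cnt H Y X := by
  classical
  unfold cnt
  simp only [dg_as_sum]
  rw [Finset.sum_comm]
  apply Finset.sum_congr rfl
  intro y _
  apply Finset.sum_congr rfl
  intro x _
  by_cases h : H.Adj x y
  · simp [h, h.symm]
  · have h' : ¬ H.Adj y x := fun hh => h hh.symm
    simp [h, h']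

lemma dg_erase (H : SimpleGraph V) {X : Finset V} {u : V} (hu : u ∈ X) (v : V) :
    dg H (X.erase u) v + (if H.Adj v u then 1 else 0) = dg H X v := by
  classical
  unfold dg
  have hfe : (X.erase u).filter (fun w => H.Adj v w) = (X.filter fun w => H.Adj v w).erase u := by
    ext a; simp; tauto
  rw [hfe]
  by_cases h : H.Adj v u
  · have hm : u ∈ X.filter fun w => H.Adj v w := by simp [hu, h]
    rw [Finset.card_erase_of_mem hm]
    have : 1 ≤ (X.filter fun w => H.Adj v w).card := Finset.card_pos.mpr ⟨u, hm⟩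
    simp [h]; omega
  · have hm : u ∉ X.filter fun w => H.Adj v w := by simp [h]
    rw [Finset.erase_eq_of_notMem hm]
    simp [h]

lemma cnt_erase_left (H : SimpleGraph V) {X : Finset V} {x : V} (hx : x ∈ X) (Y : Finset V) :
    cnt H (X.erase x) Y + dg H Y x = cnt H X Y :=
  Finset.sum_erase_add X _ hx

lemma cnt_erase_right (H : SimpleGraph V) (X : Finset V) {Y : Finset V} {y : V} (hy : y ∈ Y) :
    cnt H X (Y.erase y) + dg H X y = cnt H X Y := by
  classical
  rw [cnt_comm H X (Y.erase y), cnt_comm H X Y]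
  exact cnt_erase_left H hy X

lemma cnt_le (H : SimpleGraph V) (X Y : Finset V) : cnt H X Y ≤ X.card * Y.card := by
  unfold cnt
  calc ∑ x ∈ X, dg H Y x ≤ ∑ _x ∈ X, Y.card := Finset.sum_le_sum fun x _ => dg_le_card H Y x
    _ = X.card * Y.card := by simp [mul_comm]

lemma cnt_empty_right (H : SimpleGraph V) (X : Finset V) : cnt H X ∅ = 0 := by
  unfold cnt; simp [dg_empty]

lemma fin3_cover (x y z : Fin 3) (h1 : x ≠ y) (h2 : x ≠ z) (h3 : y ≠ z) :
    ∀ i : Fin 3, i = x ∨ i = y ∨ i = z := by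
  revert h1 h2 h3; revert x y z; decide

/-- Key C4-freeness consequence: two vertices in different parts have at most one
common neighbour inside a third part. -/
lemma codeg_le_one {H : SimpleGraph V} {p : V → Fin 3} (hfree : ¬ HasC4Multi H p)
    {u v : V} {Z : Finset V} {k : Fin 3}
    (hpuv : p u ≠ p v) (hku : k ≠ p u) (hkv : k ≠ p v)
    (hz : ∀ z ∈ Z, p z = k) :
    (Z.filter fun z => H.Adj u z ∧ H.Adj v z).card ≤ 1 := by
  by_contra hcon
  push_neg at hcon
  obtain ⟨z, hz1, z', hz'1, hne⟩ := Finset.one_lt_card.mp hcon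
  simp only [Finset.mem_filter] at hz1 hz'1
  obtain ⟨hzZ, hz2, hz3⟩ := hz1
  obtain ⟨hz'Z, hz'2, hz'3⟩ := hz'1
  have hpz : p z = k := hz z hzZ
  have hpz' : p z' = k := hz z' hz'Z
  apply hfree
  refine ⟨u, z, v, z', ?_, ?_, ?_, ?_, hne, ?_, hz2, hz3.symm, hz'3, (H.adj_symm hz'2), ?_⟩
  · intro h; subst h; simp_all
  · intro h; subst h; simp_all
  · intro h; subst h; simp_all
  · intro h; subst h; simp_all
  · intro h; subst h; simp_all
  · intro i
    rcases fin3_cover (p u) (p v) k hpuv (fun h => hku h.symm) (fun h => hkv h.symm) i with h | h | h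
    · exact ⟨u, by simp, h.symm⟩
    · exact ⟨v, by simp, h.symm⟩
    · exact ⟨z, by simp, by rw [hpz, h]⟩

end TwoTriAux

namespace TwoTriAux
open Finset
open scoped Classical

variable {V : Type*} [Fintype V] [DecidableEq V]

/-- two vertices of different parts have co-degree ≤ 1 into a third part; sum form. -/
lemma dg_add_dg_le {H : SimpleGraph V} {p : V → Fin 3} (hfree : ¬ HasC4Multi H p)
    {i j k : Fin 3} (hij : i ≠ j) (hik : i ≠ k) (hjk : j ≠ k)
    {A : Finset V} {u v : V}
    (hA : ∀ a ∈ A, p a = i) (hu : p u = j) (hv : p v = k) :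
    dg H A u + dg H A v ≤ A.card + 1 := by
  have hcup := Finset.card_union_add_card_inter
    (A.filter fun a => H.Adj u a) (A.filter fun a => H.Adj v a)
  have hinter : (A.filter fun a => H.Adj u a) ∩ (A.filter fun a => H.Adj v a)
      = A.filter fun a => H.Adj u a ∧ H.Adj v a := by
    ext a; simp; tauto
  have h1 : (A.filter fun a => H.Adj u a ∧ H.Adj v a).card ≤ 1 := by
    apply codeg_le_one hfree (k := i) _ _ _ hA
    · rw [hu, hv]; exact hjk
    · rw [hu]; exact hij
    · rw [hv]; exact hik
  have h2 : ((A.filter fun a => H.Adj u a) ∪ (A.filter fun a => H.Adj v a)).card ≤ A.card := by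
    apply Finset.card_le_card
    exact Finset.union_subset (Finset.filter_subset _ _) (Finset.filter_subset _ _)
  rw [hinter] at hcup
  unfold dg
  omega

/-- sum over B of co-degree with a fixed vertex w0 (into part-i set X) is at most |B|. -/
lemma cnt_adjfilter_le {H : SimpleGraph V} {p : V → Fin 3} (hfree : ¬ HasC4Multi H p)
    {i j k : Fin 3} (hij : i ≠ j) (hik : i ≠ k) (hjk : j ≠ k)
    {X B : Finset V} {w0 : V}
    (hX : ∀ a ∈ X, p a = i) (hB : ∀ b ∈ B, p b = j) (hw0 : p w0 = k) :
    cnt H (X.filter fun a => H.Adj w0 a) B ≤ B.card := by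
  rw [cnt_comm]
  unfold cnt
  calc ∑ b ∈ B, dg H (X.filter fun a => H.Adj w0 a) b
      ≤ ∑ _b ∈ B, 1 := by
        apply Finset.sum_le_sum
        intro b hb
        unfold dg
        rw [Finset.filter_filter]
        apply codeg_le_one hfree (k := i) _ _ _ hX
        · rw [hw0, hB b hb]; exact fun h => hjk h.symm
        · rw [hw0]; exact hik
        · rw [hB b hb]; exact hij
    _ = B.card := by simp

noncomputable def rect (H : SimpleGraph V) (Y Z : Finset V) (x : V) : Finset (V × V) :=
  (Y.filter fun u => H.Adj x u) ×ˢ (Z.filter fun u => H.Adj x u)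

lemma rect_card (H : SimpleGraph V) (Y Z : Finset V) (x : V) :
    (rect H Y Z x).card = dg H Y x * dg H Z x := by
  unfold rect dg
  exact Finset.card_product _ _

lemma rect_disjoint {H : SimpleGraph V} {p : V → Fin 3} (hfree : ¬ HasC4Multi H p)
    {i j k : Fin 3} (hij : i ≠ j) (hik : i ≠ k) (hjk : j ≠ k)
    {X Y Z : Finset V}
    (hX : ∀ a ∈ X, p a = i) (hY : ∀ b ∈ Y, p b = j) (hZ : ∀ w ∈ Z, p w = k)
    {x x' : V} (hx : x ∈ X) (hx' : x' ∈ X) (hne : x ≠ x') :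
    Disjoint (rect H Y Z x) (rect H Y Z x') := by
  rw [Finset.disjoint_left]
  rintro ⟨y, z⟩ hmem hmem'
  unfold rect at hmem hmem'
  simp only [Finset.mem_product, Finset.mem_filter] at hmem hmem'
  obtain ⟨⟨hyY, hy1⟩, hzZ, hz1⟩ := hmem
  obtain ⟨⟨_, hy2⟩, _, hz2⟩ := hmem'
  have hpx := hX x hx
  have hpx' := hX x' hx'
  have hpy := hY y hyY
  have hpz := hZ z hzZ
  apply hfree
  refine ⟨x, y, x', z, ?_, hne, ?_, ?_, ?_, ?_, hy1, H.adj_symm hy2, hz2, H.adj_symm hz1, ?_⟩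
  · intro h; subst h; simp_all
  · intro h; subst h; simp_all
  · intro h; subst h; simp_all
  · intro h; subst h; simp_all
  · intro h; subst h; simp_all
  · intro l
    rcases fin3_cover i j k hij hik hjk l with h | h | h
    · exact ⟨x, by simp, by rw [hpx, h]⟩
    · exact ⟨y, by simp, by rw [hpy, h]⟩
    · exact ⟨z, by simp, by rw [hpz, h]⟩

lemma sum_dg_mul_dg_le {H : SimpleGraph V} {p : V → Fin 3} (hfree : ¬ HasC4Multi H p)
    {i j k : Fin 3} (hij : i ≠ j) (hik : i ≠ k) (hjk : j ≠ k)
    {X Y Z : Finset V}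
    (hX : ∀ a ∈ X, p a = i) (hY : ∀ b ∈ Y, p b = j) (hZ : ∀ w ∈ Z, p w = k) :
    ∑ x ∈ X, dg H Y x * dg H Z x ≤ Y.card * Z.card := by
  have hdisj : ∀ x ∈ X, ∀ x' ∈ X, x ≠ x' → Disjoint (rect H Y Z x) (rect H Y Z x') :=
    fun x hx x' hx' hne => rect_disjoint hfree hij hik hjk hX hY hZ hx hx' hne
  calc ∑ x ∈ X, dg H Y x * dg H Z x = ∑ x ∈ X, (rect H Y Z x).card := by
        simp [rect_card]
    _ = (X.biUnion (rect H Y Z)).card := (Finset.card_biUnion hdisj).symm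
    _ ≤ (Y ×ˢ Z).card := by
        apply Finset.card_le_card
        intro q hq
        rw [Finset.mem_biUnion] at hq
        obtain ⟨x, _, hq⟩ := hq
        unfold rect at hq
        simp only [Finset.mem_product, Finset.mem_filter] at hq ⊢
        exact ⟨hq.1.1, hq.2.1⟩
    _ = Y.card * Z.card := Finset.card_product _ _

lemma prod_filter_adj_card (H : SimpleGraph V) (Y Z : Finset V) :
    ((Y ×ˢ Z).filter fun q => H.Adj q.1 q.2).card = cnt H Y Z := by
  have : (Y ×ˢ Z).filter (fun q => H.Adj q.1 q.2)
      = Y.biUnion (fun y => ({y} : Finset V) ×ˢ (Z.filter fun z => H.Adj y z)) := by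
    ext q
    simp only [Finset.mem_filter, Finset.mem_product, Finset.mem_biUnion,
      Finset.mem_singleton]
    constructor
    · rintro ⟨⟨ha, hb⟩, hadj⟩
      exact ⟨q.1, ha, ⟨rfl, by simp [hb, hadj]⟩⟩
    · rintro ⟨y, hy, hq1, h⟩
      exact ⟨⟨by rw [hq1]; exact hy, h.1⟩, by rw [hq1]; exact h.2⟩
  rw [this, Finset.card_biUnion]
  · unfold cnt dg
    apply Finset.sum_congr rfl
    intro y _
    rw [Finset.card_product, Finset.card_singleton, one_mul]
  · intro y _ y' _ hne
    rw [Function.onFun, Finset.disjoint_left]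
    rintro ⟨a, b⟩ h1 h2
    simp only [Finset.mem_product, Finset.mem_singleton] at h1 h2
    exact hne (h1.1.symm.trans h2.1)

lemma sum_dg_mul_dg_add_cnt_le {H : SimpleGraph V} {p : V → Fin 3} (hfree : ¬ HasC4Multi H p)
    (htri : ∀ u v w : V, H.Adj u v → H.Adj v w → H.Adj w u → False)
    {i j k : Fin 3} (hij : i ≠ j) (hik : i ≠ k) (hjk : j ≠ k)
    {X Y Z : Finset V}
    (hX : ∀ a ∈ X, p a = i) (hY : ∀ b ∈ Y, p b = j) (hZ : ∀ w ∈ Z, p w = k) :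
    (∑ x ∈ X, dg H Y x * dg H Z x) + cnt H Y Z ≤ Y.card * Z.card := by
  have hdisj : ∀ x ∈ X, ∀ x' ∈ X, x ≠ x' → Disjoint (rect H Y Z x) (rect H Y Z x') :=
    fun x hx x' hx' hne => rect_disjoint hfree hij hik hjk hX hY hZ hx hx' hne
  have hsub : X.biUnion (rect H Y Z) ⊆ (Y ×ˢ Z).filter fun q => ¬ H.Adj q.1 q.2 := by
    intro q hq
    rw [Finset.mem_biUnion] at hq
    obtain ⟨x, _, hq⟩ := hq
    unfold rect at hq
    simp only [Finset.mem_product, Finset.mem_filter] at hq ⊢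
    refine ⟨⟨hq.1.1, hq.2.1⟩, ?_⟩
    intro hadj
    exact htri x q.1 q.2 hq.1.2 hadj (H.adj_symm hq.2.2)
  have h1 : ∑ x ∈ X, dg H Y x * dg H Z x ≤ ((Y ×ˢ Z).filter fun q => ¬ H.Adj q.1 q.2).card := by
    calc ∑ x ∈ X, dg H Y x * dg H Z x = ∑ x ∈ X, (rect H Y Z x).card := by simp [rect_card]
      _ = (X.biUnion (rect H Y Z)).card := (Finset.card_biUnion hdisj).symm
      _ ≤ _ := Finset.card_le_card hsub
  have h2 := Finset.card_filter_add_card_filter_not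
    (s := Y ×ˢ Z) (p := fun q => H.Adj q.1 q.2)
  rw [prod_filter_adj_card] at h2
  have h3 : (Y ×ˢ Z).card = Y.card * Z.card := Finset.card_product _ _
  omega

/-- "chain" lemma: if every vertex of the centre part X has neighbours in both Y and Z,
then counting cherries wins. -/
lemma chain {H : SimpleGraph V} {p : V → Fin 3} (hfree : ¬ HasC4Multi H p)
    (htri : ∀ u v w : V, H.Adj u v → H.Adj v w → H.Adj w u → False)
    {i j k : Fin 3} (hij : i ≠ j) (hik : i ≠ k) (hjk : j ≠ k)
    {X Y Z : Finset V}
    (hX : ∀ a ∈ X, p a = i) (hY : ∀ b ∈ Y, p b = j) (hZ : ∀ w ∈ Z, p w = k)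
    (hboth : ∀ x ∈ X, 1 ≤ dg H Y x ∧ 1 ≤ dg H Z x) :
    cnt H X Y + cnt H X Z + cnt H Y Z ≤ Y.card * Z.card + X.card := by
  have key : ∀ x ∈ X, dg H Y x + dg H Z x ≤ dg H Y x * dg H Z x + 1 := by
    intro x hx
    obtain ⟨h1, h2⟩ := hboth x hx
    obtain ⟨a, ha⟩ := Nat.exists_eq_add_of_le h1
    obtain ⟨b, hb⟩ := Nat.exists_eq_add_of_le h2
    rw [ha, hb]
    ring_nf
    nlinarith
  have hsum : cnt H X Y + cnt H X Z ≤ (∑ x ∈ X, dg H Y x * dg H Z x) + X.card := by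
    unfold cnt
    rw [← Finset.sum_add_distrib]
    calc ∑ x ∈ X, (dg H Y x + dg H Z x) ≤ ∑ x ∈ X, (dg H Y x * dg H Z x + 1) :=
          Finset.sum_le_sum key
      _ = (∑ x ∈ X, dg H Y x * dg H Z x) + X.card := by rw [Finset.sum_add_distrib]; simp
  have h2 := sum_dg_mul_dg_add_cnt_le hfree htri hij hik hjk hX hY hZ
  omega

end TwoTriAux

namespace TwoTriAux
open Finset
open scoped Classical

variable {V : Type*} [Fintype V] [DecidableEq V]

lemma sum_lb {S : Finset V} {f : V → ℕ} {m : ℕ} (h : ∀ a ∈ S, m ≤ f a) :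
    S.card * m ≤ ∑ a ∈ S, f a := by
  calc S.card * m = S.card • m := by simp
    _ ≤ _ := Finset.card_nsmul_le_sum S f m h

lemma arith1 (a d e : ℕ) (h1 : 1 ≤ d) (h2 : d ≤ a) (h3 : a + 1 ≤ d + e) : a ≤ d * e := by
  zify at *
  nlinarith [mul_nonneg (by linarith : (0:ℤ) ≤ (d:ℤ) - 1) (by linarith : (0:ℤ) ≤ (a:ℤ) - (d:ℤ)),
    mul_nonneg (by linarith : (0:ℤ) ≤ (d:ℤ)) (by linarith : (0:ℤ) ≤ (e:ℤ) + (d:ℤ) - (a:ℤ) - 1)]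

lemma arith2 (c y z : ℕ) (h1 : 2 ≤ z) (h2 : z ≤ y) (h3 : z * (y + 2 - z) ≤ c) : 2 * y ≤ c := by
  have hzy2 : z ≤ y + 2 := by omega
  zify [hzy2] at h3 ⊢
  nlinarith [mul_nonneg (by linarith : (0:ℤ) ≤ (z:ℤ) - 2) (by linarith : (0:ℤ) ≤ (y:ℤ) - (z:ℤ))]

lemma E3_swap (H : SimpleGraph V) (A B C : Finset V) : E3 H B A C = E3 H A B C := by
  unfold E3
  have h1 := cnt_comm H B A
  have h2 := cnt_comm H B C
  have h3 := cnt_comm H A C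
  omega

lemma E3_rot (H : SimpleGraph V) (A B C : Finset V) : E3 H C A B = E3 H A B C := by
  unfold E3
  have h1 := cnt_comm H C A
  have h2 := cnt_comm H C B
  omega

lemma sub {H : SimpleGraph V} {p : V → Fin 3} (hfree : ¬ HasC4Multi H p)
    (htri : ∀ u v w : V, H.Adj u v → H.Adj v w → H.Adj w u → False)
    {i j k : Fin 3} (hij : i ≠ j) (hik : i ≠ k) (hjk : j ≠ k)
    {A B C : Finset V}
    (hA : ∀ a ∈ A, p a = i) (hB : ∀ b ∈ B, p b = j) (hC : ∀ w ∈ C, p w = k)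
    (hACc : A.card = C.card) (hBCc : B.card = C.card)
    (M2bw : ∀ b ∈ B, ∀ w ∈ C, C.card + 2 + (if H.Adj b w then 1 else 0) ≤
        dg H A b + dg H C b + dg H A w + dg H B w)
    (M2aw : ∀ a ∈ A, ∀ w ∈ C, C.card + 2 + (if H.Adj a w then 1 else 0) ≤
        dg H B a + dg H C a + dg H A w + dg H B w)
    (M2ab : ∀ a ∈ A, ∀ b ∈ B, C.card + 2 + (if H.Adj a b then 1 else 0) ≤
        dg H B a + dg H C a + dg H A b + dg H C b)
    {w0 : V} (hw0 : w0 ∈ C) (hw0B : dg H B w0 = 0) (hw0A : 2 ≤ dg H A w0) :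
    E3 H A B C ≤ A.card * B.card + C.card := by
  set c := C.card with hc
  have hzc : dg H A w0 ≤ c := by
    have := dg_le_card H A w0; omega
  -- Sb : codegree bound towards A for pairs (b, w0)
  have Sb : ∀ b ∈ B, dg H A b + dg H A w0 ≤ c + 1 := by
    intro b hb
    have := dg_add_dg_le hfree hij hik hjk hA (hB b hb) (hC w0 hw0)
    omega
  have hnadjb : ∀ b ∈ B, ¬ H.Adj b w0 := by
    intro b hb hadj
    exact not_adj_of_dg_zero hb hw0B hadj.symm
  have T1 : ∀ b ∈ B, 1 ≤ dg H C b := by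
    intro b hb
    have h := M2bw b hb w0 hw0
    rw [if_neg (hnadjb b hb)] at h
    have := Sb b hb
    omega
  by_cases hB2 : ∀ b ∈ B, 1 ≤ dg H A b ∧ 1 ≤ dg H C b
  · -- chain with centre B
    have hch := chain hfree htri hij.symm hjk hik hB hA hC hB2
    have h1 := cnt_comm H B A
    have h2 := cnt_comm H B C
    have e1 : A.card * C.card = A.card * B.card := by rw [hBCc, ← hc]
    unfold E3
    omega
  · push_neg at hB2
    obtain ⟨b0, hb0, hb0not⟩ := hB2
    have hb0A : dg H A b0 = 0 := by
      have := T1 b0 hb0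
      by_contra hne
      exact absurd (hb0not (by omega)) (by omega)
    set y := dg H C b0 with hy
    have hyz : c + 2 ≤ y + dg H A w0 := by
      have h := M2bw b0 hb0 w0 hw0
      rw [if_neg (hnadjb b0 hb0)] at h
      omega
    have hyc : y ≤ c := by have := dg_le_card H C b0; omega
    have hy2 : 2 ≤ y := by omega
    have Sa : ∀ a ∈ A, dg H C a + dg H C b0 ≤ c + 1 := by
      intro a ha
      have := dg_add_dg_le hfree (Ne.symm hik) (Ne.symm hjk)
        hij (A := C) hC (hA a ha) (hB b0 hb0)
      omega
    have hnadja : ∀ a ∈ A, ¬ H.Adj a b0 := by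
      intro a ha hadj
      exact not_adj_of_dg_zero ha hb0A hadj.symm
    have T2 : ∀ a ∈ A, 1 ≤ dg H B a := by
      intro a ha
      have h := M2ab a ha b0 hb0
      rw [if_neg (hnadja a ha)] at h
      have := Sa a ha
      omega
    by_cases hA2 : ∀ a ∈ A, 1 ≤ dg H B a ∧ 1 ≤ dg H C a
    · -- chain with centre A
      have hch := chain hfree htri hij hik hjk hA hB hC hA2
      have e1 : B.card * C.card = A.card * B.card := by
        rw [hACc, ← hc, mul_comm]
      unfold E3
      omega
    · push_neg at hA2
      obtain ⟨a0, ha0, ha0not⟩ := hA2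
      have ha0C : dg H C a0 = 0 := by
        have := T2 a0 ha0
        by_contra hne
        exact absurd (ha0not (by omega)) (by omega)
      set x := dg H B a0 with hx
      have hnadja0C : ∀ w ∈ C, ¬ H.Adj a0 w := by
        intro w hw hadj
        exact not_adj_of_dg_zero hw ha0C hadj
      have hxz : c + 2 ≤ x + dg H A w0 := by
        have h := M2aw a0 ha0 w0 hw0
        rw [if_neg (hnadja0C w0 hw0)] at h
        omega
      have hxc : x ≤ c := by have := dg_le_card H B a0; omega
      have hx2 : 2 ≤ x := by omega
      have Sw : ∀ w ∈ C, dg H B w + dg H B a0 ≤ c + 1 := by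
        intro w hw
        have := dg_add_dg_le hfree hjk hij.symm
          hik.symm (A := B) hB (hC w hw) (hA a0 ha0)
        omega
      have T3 : ∀ w ∈ C, 1 ≤ dg H A w := by
        intro w hw
        have h := M2aw a0 ha0 w hw
        have := Sw w hw
        have hite : (0:ℕ) ≤ if H.Adj a0 w then 1 else 0 := by positivity
        rw [if_neg (hnadja0C w hw)] at h
        omega
      -- CAP 1 : over S = N_A(w0)
      set S1 := A.filter (fun a => H.Adj w0 a) with hS1
      have hS1card : S1.card = dg H A w0 := rfl
      have cap1 : cnt H S1 B ≤ c := by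
        have h := cnt_adjfilter_le (H := H) hfree hij hik hjk hA hB (hC w0 hw0)
        rw [← hS1] at h
        omega
      have per1 : ∀ a ∈ S1, y + 2 ≤ dg H B a + dg H A w0 := by
        intro a ha
        rw [hS1, Finset.mem_filter] at ha
        have h := M2aw a ha.1 w0 hw0
        rw [if_pos ha.2.symm] at h
        have := Sa a ha.1
        omega
      rcases le_or_gt (dg H A w0) y with hzy | hzy
      · exfalso
        have hlow : ∀ a ∈ S1, y + 2 - dg H A w0 ≤ dg H B a := by
          intro a ha; have := per1 a ha; omega
        have hsum := sum_lb hlow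
        have hcnt : cnt H S1 B = ∑ a ∈ S1, dg H B a := rfl
        have hfin : dg H A w0 * (y + 2 - dg H A w0) ≤ c := by
          rw [hS1card] at hsum
          omega
        have := arith2 c y (dg H A w0) hw0A hzy hfin
        omega
      rcases le_or_gt x (dg H A w0) with hxz2 | hxz2
      · exfalso -- CAP 2
        set S2 := B.filter (fun b => H.Adj a0 b) with hS2
        have hS2card : S2.card = x := rfl
        have cap2 : cnt H S2 C ≤ c := by
          have h := cnt_adjfilter_le (H := H) hfree hjk (Ne.symm hij) (Ne.symm hik)
            hB hC (hA a0 ha0)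
          rw [← hS2] at h
          omega
        have per2 : ∀ b ∈ S2, dg H A w0 + 2 ≤ dg H C b + x := by
          intro b hb
          rw [hS2, Finset.mem_filter] at hb
          have h := M2ab a0 ha0 b hb.1
          rw [if_pos hb.2] at h
          have := Sb b hb.1
          omega
        have hlow : ∀ b ∈ S2, dg H A w0 + 2 - x ≤ dg H C b := by
          intro b hb; have := per2 b hb; omega
        have hsum := sum_lb hlow
        have hcnt : cnt H S2 C = ∑ b ∈ S2, dg H C b := rfl
        have hfin : x * (dg H A w0 + 2 - x) ≤ c := by
          rw [hS2card] at hsum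
          omega
        have := arith2 c (dg H A w0) x hx2 hxz2 hfin
        omega
      · exfalso -- CAP 3, case y < z < x
        set S3 := C.filter (fun w => H.Adj b0 w) with hS3
        have hS3card : S3.card = y := rfl
        have cap3 : cnt H S3 A ≤ c := by
          have h := cnt_adjfilter_le (H := H) hfree (Ne.symm hik) (Ne.symm hjk)
            hij hC hA (hB b0 hb0)
          rw [← hS3] at h
          omega
        have per3 : ∀ w ∈ S3, x + 2 ≤ dg H A w + y := by
          intro w hw
          rw [hS3, Finset.mem_filter] at hw
          have h := M2bw b0 hb0 w hw.1
          rw [if_pos hw.2] at h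
          have := Sw w hw.1
          omega
        have hlow : ∀ w ∈ S3, x + 2 - y ≤ dg H A w := by
          intro w hw; have := per3 w hw; omega
        have hsum := sum_lb hlow
        have hcnt : cnt H S3 A = ∑ w ∈ S3, dg H A w := rfl
        have hfin : y * (x + 2 - y) ≤ c := by
          rw [hS3card] at hsum
          omega
        have hyx : y ≤ x := by omega
        have := arith2 c x y hy2 hyx hfin
        omega

end TwoTriAux

namespace TwoTriAux
open Finset
open scoped Classical

variable {V : Type*} [Fintype V] [DecidableEq V]

lemma key {H : SimpleGraph V} {p : V → Fin 3} (hfree : ¬ HasC4Multi H p)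
    (htri : ∀ u v w : V, H.Adj u v → H.Adj v w → H.Adj w u → False) :
    ∀ N : ℕ, ∀ (i j k : Fin 3) (A B C : Finset V),
      i ≠ j → i ≠ k → j ≠ k →
      (∀ a ∈ A, p a = i) → (∀ b ∈ B, p b = j) → (∀ w ∈ C, p w = k) →
      C.card ≤ B.card → C.card ≤ A.card →
      A.card + B.card + C.card ≤ N →
      E3 H A B C ≤ A.card * B.card + C.card := by
  intro N
  induction N with
  | zero =>
    intro i j k A B C _ _ _ _ _ _ _ _ hN
    have hA0 : A.card = 0 := by omega
    have hB0 : B.card = 0 := by omega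
    rw [Finset.card_eq_zero] at hA0 hB0
    subst hA0 hB0
    unfold E3 cnt
    simp
  | succ N ih =>
    intro i j k A B C hij hik hjk hA hB hC hCB hCA hN
    by_cases hCe : C = ∅
    · subst hCe
      have h1 := cnt_le H A B
      have h2 := cnt_empty_right H B
      have h3 := cnt_empty_right H A
      unfold E3
      omega
    have hCne : C.Nonempty := Finset.nonempty_iff_ne_empty.mpr hCe
    have hC1 : 1 ≤ C.card := Finset.card_pos.mpr hCne
    -- Case 1 : a low-degree vertex of C
    by_cases h1 : ∃ w ∈ C, dg H A w + dg H B w ≤ 1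
    · obtain ⟨w, hw, hdw⟩ := h1
      have e1 := cnt_erase_right H B hw
      have e2 := cnt_erase_right H A hw
      have hcard : (C.erase w).card = C.card - 1 := Finset.card_erase_of_mem hw
      have ihres := ih i j k A B (C.erase w) hij hik hjk hA hB
        (fun x hx => hC x (Finset.mem_of_mem_erase hx))
        (by omega) (by omega) (by omega)
      unfold E3 at ihres ⊢
      omega
    push_neg at h1
    -- Case 2 : |C| < |B|
    by_cases h2 : C.card < B.card
    · by_cases h2a : ∃ b ∈ B, dg H A b + dg H C b ≤ A.card
      · obtain ⟨b, hb, hdb⟩ := h2a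
        have e1 := cnt_erase_right H A hb
        have e2 := cnt_erase_left H hb C
        have hcard : (B.erase b).card = B.card - 1 := Finset.card_erase_of_mem hb
        have hB1 : 1 ≤ B.card := Finset.card_pos.mpr ⟨b, hb⟩
        have ihres := ih i j k A (B.erase b) C hij hik hjk hA
          (fun x hx => hB x (Finset.mem_of_mem_erase hx)) hC
          (by omega) (by omega) (by omega)
        rw [hcard] at ihres
        have hmul : A.card * (B.card - 1) + A.card = A.card * B.card := by
          obtain ⟨m, hm⟩ : ∃ m, B.card = m + 1 := ⟨B.card - 1, by omega⟩
          rw [hm]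
          simp [Nat.add_sub_cancel, Nat.mul_add]
        unfold E3 at ihres ⊢
        omega
      · exfalso
        push_neg at h2a
        have hBne : B.Nonempty := Finset.card_pos.mp (by omega)
        obtain ⟨b0, hb0⟩ := hBne
        have hA1 : 1 ≤ A.card := by
          have h := h2a b0 hb0
          have l1 := dg_le_card H A b0
          have l2 := dg_le_card H C b0
          omega
        have hper : ∀ b ∈ B, A.card ≤ dg H A b * dg H C b := by
          intro b hb
          have h := h2a b hb
          have l1 := dg_le_card H A b
          have l2 := dg_le_card H C b
          exact arith1 A.card (dg H A b) (dg H C b) (by omega) (by omega) (by omega)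
        have hsum1 : B.card * A.card ≤ ∑ b ∈ B, dg H A b * dg H C b := sum_lb hper
        have hsum2 : ∑ b ∈ B, dg H A b * dg H C b ≤ A.card * C.card :=
          sum_dg_mul_dg_le hfree hij.symm hjk hik hB hA hC
        have : B.card ≤ C.card := by
          have hh : A.card * B.card ≤ A.card * C.card := by
            calc A.card * B.card = B.card * A.card := mul_comm _ _
              _ ≤ A.card * C.card := le_trans hsum1 hsum2
          exact Nat.le_of_mul_le_mul_left hh (by omega)
        omega
    have hBC : B.card = C.card := by omega
    -- Case 3a : cheap (b, w) pair
    by_cases h3a : ∃ b ∈ B, ∃ w ∈ C, dg H A b + dg H C b + dg H A w + dg H B w ≤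
        A.card + 1 + (if H.Adj b w then 1 else 0)
    · obtain ⟨b, hb, w, hw, hcond⟩ := h3a
      have e1 := cnt_erase_right H A hb
      have e2 := cnt_erase_right H B hw
      have e3 := cnt_erase_left H hb (C.erase w)
      have e4 := dg_erase H hw b
      have e5 := cnt_erase_right H A hw
      have hcardB : (B.erase b).card = B.card - 1 := Finset.card_erase_of_mem hb
      have hcardC : (C.erase w).card = C.card - 1 := Finset.card_erase_of_mem hw
      have hB1 : 1 ≤ B.card := Finset.card_pos.mpr ⟨b, hb⟩
      have ihres := ih i j k A (B.erase b) (C.erase w) hij hik hjk hA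
        (fun x hx => hB x (Finset.mem_of_mem_erase hx))
        (fun x hx => hC x (Finset.mem_of_mem_erase hx))
        (by omega) (by omega) (by omega)
      rw [hcardB, hcardC] at ihres
      have hmul : A.card * (B.card - 1) + A.card = A.card * B.card := by
        obtain ⟨m, hm⟩ : ∃ m, B.card = m + 1 := ⟨B.card - 1, by omega⟩
        rw [hm]
        simp [Nat.add_sub_cancel, Nat.mul_add]
      unfold E3 at ihres ⊢
      omega
    push_neg at h3a
    -- Case 3b : cheap (a, w) pair
    by_cases h3b : ∃ a ∈ A, ∃ w ∈ C, dg H B a + dg H C a + dg H A w + dg H B w ≤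
        B.card + 1 + (if H.Adj a w then 1 else 0)
    · obtain ⟨a, ha, w, hw, hcond⟩ := h3b
      have e1 := cnt_erase_left H ha B
      have e2 := cnt_erase_right H B hw
      have e3 := cnt_erase_right H A hw
      have e4 := cnt_erase_left H ha (C.erase w)
      have e5 := dg_erase H hw a
      have hcardA : (A.erase a).card = A.card - 1 := Finset.card_erase_of_mem ha
      have hcardC : (C.erase w).card = C.card - 1 := Finset.card_erase_of_mem hw
      have hA1 : 1 ≤ A.card := Finset.card_pos.mpr ⟨a, ha⟩
      have ihres := ih i j k (A.erase a) B (C.erase w) hij hik hjk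
        (fun x hx => hA x (Finset.mem_of_mem_erase hx)) hB
        (fun x hx => hC x (Finset.mem_of_mem_erase hx))
        (by omega) (by omega) (by omega)
      rw [hcardA, hcardC] at ihres
      have hmul : (A.card - 1) * B.card + B.card = A.card * B.card := by
        obtain ⟨m, hm⟩ : ∃ m, A.card = m + 1 := ⟨A.card - 1, by omega⟩
        rw [hm]
        simp [Nat.add_sub_cancel, Nat.add_mul]
      unfold E3 at ihres ⊢
      omega
    push_neg at h3b
    -- Case 4 : |C| < |A|
    by_cases h4 : C.card < A.card
    · by_cases h4a : ∃ a ∈ A, dg H B a + dg H C a ≤ C.card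
      · obtain ⟨a, ha, hda⟩ := h4a
        have e1 := cnt_erase_left H ha B
        have e2 := cnt_erase_left H ha C
        have hcardA : (A.erase a).card = A.card - 1 := Finset.card_erase_of_mem ha
        have hA1 : 1 ≤ A.card := Finset.card_pos.mpr ⟨a, ha⟩
        have ihres := ih i j k (A.erase a) B C hij hik hjk
          (fun x hx => hA x (Finset.mem_of_mem_erase hx)) hB hC
          (by omega) (by omega) (by omega)
        rw [hcardA] at ihres
        have hmul : (A.card - 1) * B.card + B.card = A.card * B.card := by
          obtain ⟨m, hm⟩ : ∃ m, A.card = m + 1 := ⟨A.card - 1, by omega⟩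
          rw [hm]
          simp [Nat.add_sub_cancel, Nat.add_mul]
        unfold E3 at ihres ⊢
        omega
      · exfalso
        push_neg at h4a
        have hper : ∀ a ∈ A, C.card ≤ dg H B a * dg H C a := by
          intro a ha
          have h := h4a a ha
          have l1 := dg_le_card H B a
          have l2 := dg_le_card H C a
          exact arith1 C.card (dg H B a) (dg H C a) (by omega) (by omega) (by omega)
        have hsum1 : A.card * C.card ≤ ∑ a ∈ A, dg H B a * dg H C a := sum_lb hper
        have hsum2 : ∑ a ∈ A, dg H B a * dg H C a ≤ B.card * C.card :=
          sum_dg_mul_dg_le hfree hij hik hjk hA hB hC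
        have hBCsq : B.card * C.card = C.card * C.card := by rw [hBC]
        have : A.card ≤ C.card := by
          have hh : C.card * A.card ≤ C.card * C.card := by
            calc C.card * A.card = A.card * C.card := mul_comm _ _
              _ ≤ C.card * C.card := by omega
          exact Nat.le_of_mul_le_mul_left hh (by omega)
        omega
    have hAC : A.card = C.card := by omega
    -- Case 3c : cheap (a, b) pair (all-equal sizes, role rotation)
    by_cases h3c : ∃ a ∈ A, ∃ b ∈ B, dg H B a + dg H C a + dg H A b + dg H C b ≤
        C.card + 1 + (if H.Adj a b then 1 else 0)
    · obtain ⟨a, ha, b, hb, hcond⟩ := h3c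
      have e1 := cnt_erase_left H ha B
      have e2 := cnt_erase_right H (A.erase a) hb
      have e3 := dg_erase H ha b
      have e4 := cnt_erase_left H hb C
      have e5 := cnt_erase_left H ha C
      have hcardA : (A.erase a).card = A.card - 1 := Finset.card_erase_of_mem ha
      have hcardB : (B.erase b).card = B.card - 1 := Finset.card_erase_of_mem hb
      have ihres := ih k i j C (A.erase a) (B.erase b) hik.symm hjk.symm hij hC
        (fun x hx => hA x (Finset.mem_of_mem_erase hx))
        (fun x hx => hB x (Finset.mem_of_mem_erase hx))
        (by omega) (by omega) (by omega)
      rw [hcardA, hcardB] at ihres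
      have hperm : E3 H C (A.erase a) (B.erase b) = E3 H (A.erase a) (B.erase b) C :=
        E3_rot H (A.erase a) (B.erase b) C
      have hite : dg H (A.erase a) b + (if H.Adj a b then 1 else 0) = dg H A b := by
        rw [← e3]
        congr 1
        by_cases hadj : H.Adj a b
        · rw [if_pos hadj, if_pos hadj.symm]
        · rw [if_neg hadj, if_neg (fun hh => hadj hh.symm)]
      have hmul : C.card * (A.card - 1) + C.card = C.card * A.card := by
        obtain ⟨m, hm⟩ : ∃ m, A.card = m + 1 := ⟨A.card - 1, by omega⟩
        rw [hm]
        simp [Nat.add_sub_cancel, Nat.mul_add]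
      have hmul2 : C.card * A.card = A.card * B.card := by
        rw [hBC, hAC, mul_comm]
      unfold E3 at ihres hperm ⊢
      omega
    push_neg at h3c
    -- Case 3d : terminal, all sizes equal
    by_cases h5 : ∀ w ∈ C, 1 ≤ dg H A w ∧ 1 ≤ dg H B w
    · have hch := chain hfree htri hik.symm hjk.symm hij hC hA hB h5
      have c1 := cnt_comm H C A
      have c2 := cnt_comm H C B
      unfold E3
      omega
    · push_neg at h5
      obtain ⟨w0, hw0, hw0not⟩ := h5
      have hw0deg := h1 w0 hw0
      have hM2bw : ∀ b ∈ B, ∀ w ∈ C, C.card + 2 + (if H.Adj b w then 1 else 0) ≤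
          dg H A b + dg H C b + dg H A w + dg H B w := by
        intro b hb w hw
        have := h3a b hb w hw
        omega
      have hM2aw : ∀ a ∈ A, ∀ w ∈ C, C.card + 2 + (if H.Adj a w then 1 else 0) ≤
          dg H B a + dg H C a + dg H A w + dg H B w := by
        intro a ha w hw
        have := h3b a ha w hw
        omega
      have hM2ab : ∀ a ∈ A, ∀ b ∈ B, C.card + 2 + (if H.Adj a b then 1 else 0) ≤
          dg H B a + dg H C a + dg H A b + dg H C b := by
        intro a ha b hb
        have := h3c a ha b hb
        omega
      by_cases hB0 : dg H B w0 = 0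
      · have hw0A : 2 ≤ dg H A w0 := by omega
        exact sub hfree htri hij hik hjk hA hB hC hAC hBC hM2bw hM2aw hM2ab hw0 hB0 hw0A
      · have hA0 : dg H A w0 = 0 := by
          by_contra hcon2
          have h1' : 1 ≤ dg H A w0 := by omega
          have := hw0not h1'
          omega
        have hw0B2 : 2 ≤ dg H B w0 := by omega
        -- mirrored orientation : swap roles of A and B
        have hM2bw' : ∀ b ∈ A, ∀ w ∈ C, C.card + 2 + (if H.Adj b w then 1 else 0) ≤
            dg H B b + dg H C b + dg H B w + dg H A w := by
          intro b hbA w hw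
          have := hM2aw b hbA w hw
          omega
        have hM2aw' : ∀ a ∈ B, ∀ w ∈ C, C.card + 2 + (if H.Adj a w then 1 else 0) ≤
            dg H A a + dg H C a + dg H B w + dg H A w := by
          intro a haB w hw
          have := hM2bw a haB w hw
          omega
        have hM2ab' : ∀ a ∈ B, ∀ b ∈ A, C.card + 2 + (if H.Adj a b then 1 else 0) ≤
            dg H A a + dg H C a + dg H B b + dg H C b := by
          intro a haB b hbA
          have h := hM2ab b hbA a haB
          have hiteq : (if H.Adj b a then 1 else 0) = (if H.Adj a b then 1 else 0) := by
            by_cases hadj : H.Adj a b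
            · rw [if_pos hadj, if_pos hadj.symm]
            · rw [if_neg hadj, if_neg (fun hh => hadj hh.symm)]
          omega
        have hres := sub hfree htri hij.symm (Ne.symm hjk).symm hik
          (A := B) (B := A) (C := C) hB hA hC hBC hAC hM2bw' hM2aw' hM2ab' hw0 hA0 hw0B2
        have hperm := E3_swap H A B C
        have hmul3 : B.card * A.card = A.card * B.card := mul_comm _ _
        omega

end TwoTriAux

namespace TwoTriAux
open Finset
open scoped Classical

lemma fin3cases : ∀ x : Fin 3, x = 0 ∨ x = 1 ∨ x = 2 := by decide

variable {n1 n2 n3 : ℕ}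

noncomputable def P (n1 n2 n3 : ℕ) (i : Fin 3) : Finset (Fin n1 ⊕ Fin n2 ⊕ Fin n3) :=
  Finset.univ.filter (fun v => triPart v = i)

lemma memP {i : Fin 3} : ∀ v ∈ P n1 n2 n3 i, triPart v = i := by
  intro v hv
  exact (Finset.mem_filter.mp hv).2

lemma mem_P_iff {i : Fin 3} {v : Fin n1 ⊕ Fin n2 ⊕ Fin n3} :
    v ∈ P n1 n2 n3 i ↔ triPart v = i := by
  simp [P]

lemma cardP0 : (P n1 n2 n3 0).card = n1 := by
  have h : P n1 n2 n3 0 = Finset.univ.map ⟨Sum.inl, Sum.inl_injective⟩ := by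
    ext v
    rw [mem_P_iff]
    cases v with
    | inl a => simp [triPart]
    | inr b =>
      cases b with
      | inl x =>
        simp only [triPart, Finset.mem_map, Function.Embedding.coeFn_mk]
        constructor
        · intro h; exact absurd h (by decide)
        · rintro ⟨a, _, ha⟩; cases ha
      | inr x =>
        simp only [triPart, Finset.mem_map, Function.Embedding.coeFn_mk]
        constructor
        · intro h; exact absurd h (by decide)
        · rintro ⟨a, _, ha⟩; cases ha
  rw [h, Finset.card_map, Finset.card_univ, Fintype.card_fin]

lemma cardP1 : (P n1 n2 n3 1).card = n2 := by
  have h : P n1 n2 n3 1 = Finset.univ.map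
      ⟨fun x => Sum.inr (Sum.inl x), fun a b hh => by simpa using hh⟩ := by
    ext v
    rw [mem_P_iff]
    cases v with
    | inl a =>
      simp only [triPart, Finset.mem_map, Function.Embedding.coeFn_mk]
      constructor
      · intro h; exact absurd h (by decide)
      · rintro ⟨a, _, ha⟩; cases ha
    | inr b =>
      cases b with
      | inl x => simp [triPart]; exact ⟨x, rfl⟩
      | inr x =>
        simp only [triPart, Finset.mem_map, Function.Embedding.coeFn_mk]
        constructor
        · intro h; exact absurd h (by decide)
        · rintro ⟨a, _, ha⟩; cases ha
  rw [h, Finset.card_map, Finset.card_univ, Fintype.card_fin]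

lemma cardP2 : (P n1 n2 n3 2).card = n3 := by
  have h : P n1 n2 n3 2 = Finset.univ.map
      ⟨fun x => Sum.inr (Sum.inr x), fun a b hh => by simpa using hh⟩ := by
    ext v
    rw [mem_P_iff]
    cases v with
    | inl a =>
      simp only [triPart, Finset.mem_map, Function.Embedding.coeFn_mk]
      constructor
      · intro h; exact absurd h (by decide)
      · rintro ⟨a, _, ha⟩; cases ha
    | inr b =>
      cases b with
      | inl x =>
        simp only [triPart, Finset.mem_map, Function.Embedding.coeFn_mk]
        constructor
        · intro h; exact absurd h (by decide)
        · rintro ⟨a, _, ha⟩; cases ha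
      | inr x => simp [triPart]; exact ⟨x, rfl⟩
  rw [h, Finset.card_map, Finset.card_univ, Fintype.card_fin]

end TwoTriAux

namespace TwoTriAux
open Finset
open scoped Classical

variable {n1 n2 n3 : ℕ}

lemma dg_self_zero {H : SimpleGraph (Fin n1 ⊕ Fin n2 ⊕ Fin n3)}
    (hH : H ≤ triK n1 n2 n3) {i : Fin 3} {v : Fin n1 ⊕ Fin n2 ⊕ Fin n3}
    (hv : triPart v = i) : dg H (P n1 n2 n3 i) v = 0 := by
  unfold dg
  rw [Finset.card_eq_zero]
  ext u
  simp only [Finset.mem_filter, Finset.notMem_empty, iff_false, not_and]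
  intro hu hadj
  have h1 : triPart u = i := memP u hu
  have h2 : triPart v ≠ triPart u := by simpa [triK] using hH hadj
  rw [hv, h1] at h2
  exact h2 rfl

lemma degree_split {H : SimpleGraph (Fin n1 ⊕ Fin n2 ⊕ Fin n3)}
    (v : Fin n1 ⊕ Fin n2 ⊕ Fin n3) :
    H.degree v = dg H (P n1 n2 n3 0) v + dg H (P n1 n2 n3 1) v + dg H (P n1 n2 n3 2) v := by
  classical
  have h0 : H.neighborFinset v = Finset.univ.filter (fun u => H.Adj v u) := by
    ext u; simp
  have hU : Finset.univ.filter (fun u => H.Adj v u)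
      = ((P n1 n2 n3 0).filter (fun u => H.Adj v u)
        ∪ (P n1 n2 n3 1).filter (fun u => H.Adj v u))
        ∪ (P n1 n2 n3 2).filter (fun u => H.Adj v u) := by
    ext u
    simp only [Finset.mem_filter, Finset.mem_union, Finset.mem_univ, true_and, mem_P_iff]
    constructor
    · intro h
      rcases fin3cases (triPart u) with hh | hh | hh
      · exact Or.inl (Or.inl ⟨hh, h⟩)
      · exact Or.inl (Or.inr ⟨hh, h⟩)
      · exact Or.inr ⟨hh, h⟩
    · rintro ((⟨_, h⟩ | ⟨_, h⟩) | ⟨_, h⟩) <;> exact h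
  have hd1 : Disjoint ((P n1 n2 n3 0).filter (fun u => H.Adj v u))
      ((P n1 n2 n3 1).filter (fun u => H.Adj v u)) := by
    rw [Finset.disjoint_left]
    intro u h1 h2
    rw [Finset.mem_filter, mem_P_iff] at h1 h2
    rw [h1.1] at h2
    exact absurd h2.1 (by decide)
  have hd2 : Disjoint (((P n1 n2 n3 0).filter (fun u => H.Adj v u))
      ∪ ((P n1 n2 n3 1).filter (fun u => H.Adj v u)))
      ((P n1 n2 n3 2).filter (fun u => H.Adj v u)) := by
    rw [Finset.disjoint_left]
    intro u h1 h2
    rw [Finset.mem_union] at h1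
    rw [Finset.mem_filter, mem_P_iff] at h2
    rcases h1 with h1 | h1 <;> rw [Finset.mem_filter, mem_P_iff] at h1 <;>
      rw [h1.1] at h2 <;> exact absurd h2.1 (by decide)
  rw [SimpleGraph.degree, h0, hU, Finset.card_union_of_disjoint hd2,
    Finset.card_union_of_disjoint hd1]
  rfl

lemma univ_split :
    (Finset.univ : Finset (Fin n1 ⊕ Fin n2 ⊕ Fin n3))
      = (P n1 n2 n3 0 ∪ P n1 n2 n3 1) ∪ P n1 n2 n3 2 := by
  ext u
  simp only [Finset.mem_univ, Finset.mem_union, mem_P_iff, true_iff]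
  rcases fin3cases (triPart u) with hh | hh | hh
  · exact Or.inl (Or.inl hh)
  · exact Or.inl (Or.inr hh)
  · exact Or.inr hh

lemma P_disj1 : Disjoint (P n1 n2 n3 0) (P n1 n2 n3 1) := by
  rw [Finset.disjoint_left]
  intro u h1 h2
  rw [mem_P_iff] at h1 h2
  rw [h1] at h2
  exact absurd h2 (by decide)

lemma P_disj2 : Disjoint (P n1 n2 n3 0 ∪ P n1 n2 n3 1) (P n1 n2 n3 2) := by
  rw [Finset.disjoint_left]
  intro u h1 h2
  rw [Finset.mem_union] at h1
  rw [mem_P_iff] at h2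
  rcases h1 with h1 | h1 <;> rw [mem_P_iff] at h1 <;> rw [h1] at h2 <;>
    exact absurd h2 (by decide)

lemma edge_eq_E3 {H : SimpleGraph (Fin n1 ⊕ Fin n2 ⊕ Fin n3)}
    (hH : H ≤ triK n1 n2 n3) :
    H.edgeSet.ncard = E3 H (P n1 n2 n3 0) (P n1 n2 n3 1) (P n1 n2 n3 2) := by
  classical
  have hcard : H.edgeSet.ncard = H.edgeFinset.card := by
    rw [Set.ncard_eq_toFinset_card']
    congr 1
  have hdeg : ∑ v, H.degree v = 2 * H.edgeFinset.card := H.sum_degrees_eq_twice_card_edges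
  rw [univ_split, Finset.sum_union P_disj2, Finset.sum_union P_disj1] at hdeg
  have e0 : ∑ v ∈ P n1 n2 n3 0, H.degree v
      = cnt H (P n1 n2 n3 0) (P n1 n2 n3 1) + cnt H (P n1 n2 n3 0) (P n1 n2 n3 2) := by
    unfold cnt
    rw [← Finset.sum_add_distrib]
    apply Finset.sum_congr rfl
    intro v hv
    rw [degree_split v, dg_self_zero hH (memP v hv)]
    omega
  have e1 : ∑ v ∈ P n1 n2 n3 1, H.degree v
      = cnt H (P n1 n2 n3 1) (P n1 n2 n3 0) + cnt H (P n1 n2 n3 1) (P n1 n2 n3 2) := by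
    unfold cnt
    rw [← Finset.sum_add_distrib]
    apply Finset.sum_congr rfl
    intro v hv
    rw [degree_split v, dg_self_zero hH (memP v hv)]
    omega
  have e2 : ∑ v ∈ P n1 n2 n3 2, H.degree v
      = cnt H (P n1 n2 n3 2) (P n1 n2 n3 0) + cnt H (P n1 n2 n3 2) (P n1 n2 n3 1) := by
    unfold cnt
    rw [← Finset.sum_add_distrib]
    apply Finset.sum_congr rfl
    intro v hv
    rw [degree_split v, dg_self_zero hH (memP v hv)]
    omega
  have c1 := cnt_comm H (P n1 n2 n3 1) (P n1 n2 n3 0)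
  have c2 := cnt_comm H (P n1 n2 n3 2) (P n1 n2 n3 0)
  have c3 := cnt_comm H (P n1 n2 n3 2) (P n1 n2 n3 1)
  unfold E3
  omega

end TwoTriAux

namespace TwoTriAux
open Finset
open scoped Classical

variable {n1 n2 n3 : ℕ}

lemma hasC4_mono {V : Type*} {G G' : SimpleGraph V} {p : V → Fin 3}
    (hle : G' ≤ G) (h : HasC4Multi G' p) : HasC4Multi G p := by
  obtain ⟨a, b, c, d, h1, h2, h3, h4, h5, h6, e1, e2, e3, e4, hcov⟩ := h
  exact ⟨a, b, c, d, h1, h2, h3, h4, h5, h6, hle e1, hle e2, hle e3, hle e4, hcov⟩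

lemma ne_of_parts {x y : Fin n1 ⊕ Fin n2 ⊕ Fin n3} {i j : Fin 3}
    (hx : triPart x = i) (hy : triPart y = j) (hij : i ≠ j) : x ≠ y := by
  intro h
  rw [h, hy] at hx
  exact hij hx.symm

lemma sort3 {G : SimpleGraph (Fin n1 ⊕ Fin n2 ⊕ Fin n3)} (hG : G ≤ triK n1 n2 n3)
    {u v w : Fin n1 ⊕ Fin n2 ⊕ Fin n3}
    (huv : G.Adj u v) (hvw : G.Adj v w) (hwu : G.Adj w u) :
    ∃ x y z, triPart x = 0 ∧ triPart y = 1 ∧ triPart z = 2 ∧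
      G.Adj x y ∧ G.Adj y z ∧ G.Adj x z ∧
      ({x, y, z} : Set (Fin n1 ⊕ Fin n2 ⊕ Fin n3)) = {u, v, w} := by
  have h1 : triPart u ≠ triPart v := by simpa [triK] using hG huv
  have h2 : triPart v ≠ triPart w := by simpa [triK] using hG hvw
  have h3 : triPart w ≠ triPart u := by simpa [triK] using hG hwu
  rcases fin3cases (triPart u) with hu | hu | hu <;>
    rcases fin3cases (triPart v) with hv | hv | hv <;>
      rcases fin3cases (triPart w) with hw | hw | hw <;>
  first
    | (exact absurd (hu.trans hv.symm) h1)
    | (exact absurd (hv.trans hw.symm) h2)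
    | (exact absurd (hw.trans hu.symm) h3)
    | (exact ⟨u, v, w, hu, hv, hw, huv, hvw, hwu.symm, rfl⟩)
    | (exact ⟨u, w, v, hu, hw, hv, hwu.symm, hvw.symm, huv, by ext t; simp; tauto⟩)
    | (exact ⟨v, u, w, hv, hu, hw, huv.symm, hwu.symm, hvw, by ext t; simp; tauto⟩)
    | (exact ⟨v, w, u, hv, hw, hu, hvw, hwu, huv.symm, by ext t; simp; tauto⟩)
    | (exact ⟨w, u, v, hw, hu, hv, hwu, huv, hvw.symm, by ext t; simp; tauto⟩)
    | (exact ⟨w, v, u, hw, hv, hu, hvw.symm, huv.symm, hwu, by ext t; simp; tauto⟩)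

lemma tri_unique {G : SimpleGraph (Fin n1 ⊕ Fin n2 ⊕ Fin n3)}
    (hfree : ¬ HasC4Multi G triPart)
    (hcon : ∀ a b d a' b' d' : Fin n1 ⊕ Fin n2 ⊕ Fin n3,
      ¬((G.Adj a b ∧ G.Adj b d ∧ G.Adj a d) ∧
        (G.Adj a' b' ∧ G.Adj b' d' ∧ G.Adj a' d') ∧
        ({a, b, d} : Set (Fin n1 ⊕ Fin n2 ⊕ Fin n3)) ≠ {a', b', d'} ∧
        (({a, b, d} : Set (Fin n1 ⊕ Fin n2 ⊕ Fin n3)) ∩ {a', b', d'}).ncard ≤ 1))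
    {a b c a' b' c' : Fin n1 ⊕ Fin n2 ⊕ Fin n3}
    (pa : triPart a = 0) (pb : triPart b = 1) (pc : triPart c = 2)
    (pa' : triPart a' = 0) (pb' : triPart b' = 1) (pc' : triPart c' = 2)
    (t1 : G.Adj a b ∧ G.Adj b c ∧ G.Adj a c)
    (t2 : G.Adj a' b' ∧ G.Adj b' c' ∧ G.Adj a' c') :
    a = a' ∧ b = b' ∧ c = c' := by
  obtain ⟨hab, hbc, hac⟩ := t1
  obtain ⟨hab', hbc', hac'⟩ := t2
  have hseteq : ({a, b, c} : Set (Fin n1 ⊕ Fin n2 ⊕ Fin n3)) = {a', b', c'} →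
      a = a' ∧ b = b' ∧ c = c' := by
    intro he
    have hma : a ∈ ({a', b', c'} : Set (Fin n1 ⊕ Fin n2 ⊕ Fin n3)) := by
      rw [← he]; simp
    have hmb : b ∈ ({a', b', c'} : Set (Fin n1 ⊕ Fin n2 ⊕ Fin n3)) := by
      rw [← he]; simp
    have hmc : c ∈ ({a', b', c'} : Set (Fin n1 ⊕ Fin n2 ⊕ Fin n3)) := by
      rw [← he]; simp
    simp only [Set.mem_insert_iff, Set.mem_singleton_iff] at hma hmb hmc
    refine ⟨?_, ?_, ?_⟩
    · rcases hma with h | h | h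
      · exact h
      · exact absurd (show triPart a = 1 by rw [h]; exact pb') (by rw [pa]; decide)
      · exact absurd (show triPart a = 2 by rw [h]; exact pc') (by rw [pa]; decide)
    · rcases hmb with h | h | h
      · exact absurd (show triPart b = 0 by rw [h]; exact pa') (by rw [pb]; decide)
      · exact h
      · exact absurd (show triPart b = 2 by rw [h]; exact pc') (by rw [pb]; decide)
    · rcases hmc with h | h | h
      · exact absurd (show triPart c = 0 by rw [h]; exact pa') (by rw [pc]; decide)
      · exact absurd (show triPart c = 1 by rw [h]; exact pb') (by rw [pc]; decide)
      · exact h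
  have hintersub : ∀ x ∈ ({a, b, c} : Set (Fin n1 ⊕ Fin n2 ⊕ Fin n3)) ∩ {a', b', c'},
      (x = a ∧ a = a') ∨ (x = b ∧ b = b') ∨ (x = c ∧ c = c') := by
    rintro x ⟨hx1, hx2⟩
    simp only [Set.mem_insert_iff, Set.mem_singleton_iff] at hx1 hx2
    rcases hx1 with h1 | h1 | h1 <;> rw [h1] at hx2
    · rcases hx2 with h | h | h
      · exact Or.inl ⟨h1, h⟩
      · exact absurd (show triPart a = 1 by rw [h]; exact pb') (by rw [pa]; decide)
      · exact absurd (show triPart a = 2 by rw [h]; exact pc') (by rw [pa]; decide)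
    · rcases hx2 with h | h | h
      · exact absurd (show triPart b = 0 by rw [h]; exact pa') (by rw [pb]; decide)
      · exact Or.inr (Or.inl ⟨h1, h⟩)
      · exact absurd (show triPart b = 2 by rw [h]; exact pc') (by rw [pb]; decide)
    · rcases hx2 with h | h | h
      · exact absurd (show triPart c = 0 by rw [h]; exact pa') (by rw [pc]; decide)
      · exact absurd (show triPart c = 1 by rw [h]; exact pb') (by rw [pc]; decide)
      · exact Or.inr (Or.inr ⟨h1, h⟩)
  have hsing : ∀ y : Fin n1 ⊕ Fin n2 ⊕ Fin n3,
      (({a, b, c} : Set (Fin n1 ⊕ Fin n2 ⊕ Fin n3)) ∩ {a', b', c'}) ⊆ {y} →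
      (({a, b, c} : Set (Fin n1 ⊕ Fin n2 ⊕ Fin n3)) ∩ {a', b', c'}).ncard ≤ 1 := by
    intro y hsub
    calc (({a, b, c} : Set (Fin n1 ⊕ Fin n2 ⊕ Fin n3)) ∩ {a', b', c'}).ncard
        ≤ ({y} : Set (Fin n1 ⊕ Fin n2 ⊕ Fin n3)).ncard :=
          Set.ncard_le_ncard hsub (Set.finite_singleton y)
      _ = 1 := Set.ncard_singleton y
  by_cases ha : a = a' <;> by_cases hb : b = b' <;> by_cases hc : c = c'
  · exact ⟨ha, hb, hc⟩
  · -- a = a', b = b', c ≠ c' : C4 (c, a, c', b)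
    exfalso; apply hfree
    refine ⟨c, a, c', b, ?_, hc, ?_, ?_, ?_, ?_, hac.symm, ha ▸ hac', hb ▸ hbc'.symm, hbc, ?_⟩
    · exact ne_of_parts pc pa (by decide)
    · exact ne_of_parts pc pb (by decide)
    · exact ne_of_parts pa pc' (by decide)
    · exact ne_of_parts pa pb (by decide)
    · exact ne_of_parts pc' pb (by decide)
    · intro i
      rcases fin3cases i with hi | hi | hi <;> subst hi
      · exact ⟨a, by simp, pa⟩
      · exact ⟨b, by simp, pb⟩
      · exact ⟨c, by simp, pc⟩
  · -- a = a', b ≠ b', c = c' : C4 (b, a, b', c)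
    exfalso; apply hfree
    refine ⟨b, a, b', c, ?_, hb, ?_, ?_, ?_, ?_, hab.symm, ha ▸ hab', hc ▸ hbc', hbc.symm, ?_⟩
    · exact ne_of_parts pb pa (by decide)
    · exact ne_of_parts pb pc (by decide)
    · exact ne_of_parts pa pb' (by decide)
    · exact ne_of_parts pa pc (by decide)
    · exact ne_of_parts pb' pc (by decide)
    · intro i
      rcases fin3cases i with hi | hi | hi <;> subst hi
      · exact ⟨a, by simp, pa⟩
      · exact ⟨b, by simp, pb⟩
      · exact ⟨c, by simp, pc⟩
  · -- a = a', b ≠ b', c ≠ c' : use hcon, intersection ⊆ {a}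
    exfalso
    refine hcon a b c a' b' c' ⟨⟨hab, hbc, hac⟩, ⟨hab', hbc', hac'⟩, ?_, ?_⟩
    · intro he; exact hb (hseteq he).2.1
    · apply hsing a
      intro x hx
      rcases hintersub x hx with ⟨h1, _⟩ | ⟨_, h2⟩ | ⟨_, h2⟩
      · rw [h1]; rfl
      · exact absurd h2 hb
      · exact absurd h2 hc
  · -- a ≠ a', b = b', c = c' : C4 (a, b, a', c)
    exfalso; apply hfree
    refine ⟨a, b, a', c, ?_, ha, ?_, ?_, ?_, ?_, hab, hb ▸ hab'.symm, hc ▸ hac', hac.symm, ?_⟩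
    · exact ne_of_parts pa pb (by decide)
    · exact ne_of_parts pa pc (by decide)
    · exact ne_of_parts pb pa' (by decide)
    · exact ne_of_parts pb pc (by decide)
    · exact ne_of_parts pa' pc (by decide)
    · intro i
      rcases fin3cases i with hi | hi | hi <;> subst hi
      · exact ⟨a, by simp, pa⟩
      · exact ⟨b, by simp, pb⟩
      · exact ⟨c, by simp, pc⟩
  · -- a ≠ a', b = b', c ≠ c' : hcon, intersection ⊆ {b}
    exfalso
    refine hcon a b c a' b' c' ⟨⟨hab, hbc, hac⟩, ⟨hab', hbc', hac'⟩, ?_, ?_⟩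
    · intro he; exact ha (hseteq he).1
    · apply hsing b
      intro x hx
      rcases hintersub x hx with ⟨_, h2⟩ | ⟨h1, _⟩ | ⟨_, h2⟩
      · exact absurd h2 ha
      · rw [h1]; rfl
      · exact absurd h2 hc
  · -- a ≠ a', b ≠ b', c = c' : hcon, intersection ⊆ {c}
    exfalso
    refine hcon a b c a' b' c' ⟨⟨hab, hbc, hac⟩, ⟨hab', hbc', hac'⟩, ?_, ?_⟩
    · intro he; exact ha (hseteq he).1
    · apply hsing c
      intro x hx
      rcases hintersub x hx with ⟨_, h2⟩ | ⟨_, h2⟩ | ⟨h1, _⟩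
      · exact absurd h2 ha
      · exact absurd h2 hb
      · rw [h1]; rfl
  · -- all differ : hcon, intersection empty
    exfalso
    refine hcon a b c a' b' c' ⟨⟨hab, hbc, hac⟩, ⟨hab', hbc', hac'⟩, ?_, ?_⟩
    · intro he; exact ha (hseteq he).1
    · apply hsing a
      intro x hx
      rcases hintersub x hx with ⟨_, h2⟩ | ⟨_, h2⟩ | ⟨_, h2⟩
      · rw [h2]; exact absurd h2 ha
      · exact absurd h2 hb
      · exact absurd h2 hc

end TwoTriAux

namespace TwoTriAux
open Finset
open scoped Classical

variable {n1 n2 n3 : ℕ}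

lemma E3_delete {G : SimpleGraph (Fin n1 ⊕ Fin n2 ⊕ Fin n3)}
    {a0 b0 : Fin n1 ⊕ Fin n2 ⊕ Fin n3} (pa : triPart a0 = 0) (pb : triPart b0 = 1) :
    E3 G (P n1 n2 n3 0) (P n1 n2 n3 1) (P n1 n2 n3 2)
      ≤ E3 (G.deleteEdges {s(a0, b0)}) (P n1 n2 n3 0) (P n1 n2 n3 1) (P n1 n2 n3 2) + 1 := by
  classical
  set G' := G.deleteEdges {s(a0, b0)} with hG'def
  have hadj : ∀ u v, G'.Adj v u ↔ G.Adj v u ∧ ¬ s(v, u) = s(a0, b0) := by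
    intro u v
    rw [hG'def, SimpleGraph.deleteEdges_adj]
    simp
  have hiff2 : ∀ v u, ¬(v = a0 ∧ u = b0) → ¬(v = b0 ∧ u = a0) →
      (G.Adj v u ↔ G'.Adj v u) := by
    intro v u h1 h2
    rw [hadj]
    constructor
    · intro h
      refine ⟨h, ?_⟩
      intro hs
      rw [Sym2.eq_iff] at hs
      tauto
    · exact fun h => h.1
  have hdgeq : ∀ (X : Finset (Fin n1 ⊕ Fin n2 ⊕ Fin n3)) (v : Fin n1 ⊕ Fin n2 ⊕ Fin n3),
      (∀ u ∈ X, (G.Adj v u ↔ G'.Adj v u)) → dg G X v = dg G' X v := by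
    intro X v h
    unfold dg
    rw [Finset.filter_congr h]
    congr 1
    ext u; simp
  have e02 : cnt G (P n1 n2 n3 0) (P n1 n2 n3 2) = cnt G' (P n1 n2 n3 0) (P n1 n2 n3 2) := by
    apply Finset.sum_congr rfl
    intro v hv
    apply hdgeq
    intro u hu
    apply hiff2
    · rintro ⟨_, h4⟩
      rw [h4] at hu
      have := memP b0 hu
      rw [pb] at this
      exact absurd this (by decide)
    · rintro ⟨h3, _⟩
      rw [h3] at hv
      have := memP b0 hv
      rw [pb] at this
      exact absurd this (by decide)
  have e12 : cnt G (P n1 n2 n3 1) (P n1 n2 n3 2) = cnt G' (P n1 n2 n3 1) (P n1 n2 n3 2) := by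
    apply Finset.sum_congr rfl
    intro v hv
    apply hdgeq
    intro u hu
    apply hiff2
    · rintro ⟨h3, _⟩
      rw [h3] at hv
      have := memP a0 hv
      rw [pa] at this
      exact absurd this (by decide)
    · rintro ⟨_, h4⟩
      rw [h4] at hu
      have := memP a0 hu
      rw [pa] at this
      exact absurd this (by decide)
  have ha0P : a0 ∈ P n1 n2 n3 0 := mem_P_iff.mpr pa
  have e01 : cnt G (P n1 n2 n3 0) (P n1 n2 n3 1)
      ≤ cnt G' (P n1 n2 n3 0) (P n1 n2 n3 1) + 1 := by
    have s1 : ∑ v ∈ (P n1 n2 n3 0).erase a0, dg G (P n1 n2 n3 1) v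
        + dg G (P n1 n2 n3 1) a0 = cnt G (P n1 n2 n3 0) (P n1 n2 n3 1) :=
      Finset.sum_erase_add _ _ ha0P
    have s2 : ∑ v ∈ (P n1 n2 n3 0).erase a0, dg G' (P n1 n2 n3 1) v
        + dg G' (P n1 n2 n3 1) a0 = cnt G' (P n1 n2 n3 0) (P n1 n2 n3 1) :=
      Finset.sum_erase_add _ _ ha0P
    have heq : ∑ v ∈ (P n1 n2 n3 0).erase a0, dg G (P n1 n2 n3 1) v
        = ∑ v ∈ (P n1 n2 n3 0).erase a0, dg G' (P n1 n2 n3 1) v := by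
      apply Finset.sum_congr rfl
      intro v hv
      apply hdgeq
      intro u hu
      apply hiff2
      · rintro ⟨h3, _⟩
        exact (Finset.ne_of_mem_erase hv) h3
      · rintro ⟨h3, _⟩
        rw [h3] at hv
        have := memP b0 (Finset.mem_of_mem_erase hv)
        rw [pb] at this
        exact absurd this (by decide)
    have hlast : dg G (P n1 n2 n3 1) a0 ≤ dg G' (P n1 n2 n3 1) a0 + 1 := by
      have hsub : (P n1 n2 n3 1).filter (fun u => G.Adj a0 u)
          ⊆ insert b0 ((P n1 n2 n3 1).filter (fun u => G'.Adj a0 u)) := by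
        intro u hu
        rw [Finset.mem_filter] at hu
        by_cases hub : u = b0
        · rw [hub]; exact Finset.mem_insert_self _ _
        · apply Finset.mem_insert_of_mem
          rw [Finset.mem_filter]
          refine ⟨hu.1, ?_⟩
          rw [← hiff2 a0 u ?_ ?_]
          · exact hu.2
          · rintro ⟨_, h4⟩; exact hub h4
          · rintro ⟨h3, _⟩
            rw [h3, pb] at pa
            exact absurd pa (by decide)
      calc dg G (P n1 n2 n3 1) a0
          ≤ (insert b0 ((P n1 n2 n3 1).filter (fun u => G'.Adj a0 u))).card :=
            Finset.card_le_card hsub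
        _ ≤ dg G' (P n1 n2 n3 1) a0 + 1 := by unfold dg; convert Finset.card_insert_le _ _
    omega
  unfold E3
  omega

end TwoTriAux


/-- a `C4^multi`-free subgraph of `K_{n1,n2,n3}` with at least
`n1*n2 + n3 + 2` edges contains two distinct triangles sharing at most one common
vertex. -/
theorem two_triangles_of_many_edges (n1 n2 n3 : ℕ) (h12 : n2 ≤ n1) (h23 : n3 ≤ n2)
    (h3 : 1 ≤ n3)
    (G : SimpleGraph (Fin n1 ⊕ Fin n2 ⊕ Fin n3)) (hG : G ≤ triK n1 n2 n3)
    (hfree : ¬ HasC4Multi G triPart)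
    (he : n1 * n2 + n3 + 2 ≤ G.edgeSet.ncard) :
    ∃ a b d a' b' d' : Fin n1 ⊕ Fin n2 ⊕ Fin n3,
      (G.Adj a b ∧ G.Adj b d ∧ G.Adj a d) ∧
      (G.Adj a' b' ∧ G.Adj b' d' ∧ G.Adj a' d') ∧
      ({a, b, d} : Set (Fin n1 ⊕ Fin n2 ⊕ Fin n3)) ≠ {a', b', d'} ∧
      (({a, b, d} : Set (Fin n1 ⊕ Fin n2 ⊕ Fin n3)) ∩ {a', b', d'}).ncard ≤ 1 := by
  classical
  by_contra hcon0
  have hcon : ∀ a b d a' b' d' : Fin n1 ⊕ Fin n2 ⊕ Fin n3,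
      ¬((G.Adj a b ∧ G.Adj b d ∧ G.Adj a d) ∧
        (G.Adj a' b' ∧ G.Adj b' d' ∧ G.Adj a' d') ∧
        ({a, b, d} : Set (Fin n1 ⊕ Fin n2 ⊕ Fin n3)) ≠ {a', b', d'} ∧
        (({a, b, d} : Set (Fin n1 ⊕ Fin n2 ⊕ Fin n3)) ∩ {a', b', d'}).ncard ≤ 1) := by
    intro a b d a' b' d' hcontra
    exact hcon0 ⟨a, b, d, a', b', d', hcontra.1, hcontra.2.1, hcontra.2.2.1, hcontra.2.2.2⟩
  have hmem0 := @TwoTriAux.memP n1 n2 n3 (0 : Fin 3)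
  have hmem1 := @TwoTriAux.memP n1 n2 n3 (1 : Fin 3)
  have hmem2 := @TwoTriAux.memP n1 n2 n3 (2 : Fin 3)
  have hc0 : (TwoTriAux.P n1 n2 n3 0).card = n1 := TwoTriAux.cardP0
  have hc1 : (TwoTriAux.P n1 n2 n3 1).card = n2 := TwoTriAux.cardP1
  have hc2 : (TwoTriAux.P n1 n2 n3 2).card = n3 := TwoTriAux.cardP2
  by_cases htr : ∃ x y z : Fin n1 ⊕ Fin n2 ⊕ Fin n3,
      triPart x = 0 ∧ triPart y = 1 ∧ triPart z = 2 ∧ G.Adj x y ∧ G.Adj y z ∧ G.Adj x z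
  · obtain ⟨x0, y0, z0, px, py, pz, e1, e2, e3⟩ := htr
    set G' := G.deleteEdges {s(x0, y0)} with hG'def
    have hle : G' ≤ G := SimpleGraph.deleteEdges_le _
    have hG' : G' ≤ triK n1 n2 n3 := le_trans hle hG
    have hfree' : ¬ HasC4Multi G' triPart := fun h => hfree (TwoTriAux.hasC4_mono hle h)
    have htri' : ∀ u v w, G'.Adj u v → G'.Adj v w → G'.Adj w u → False := by
      intro u v w d1 d2 d3
      obtain ⟨x, y, z, hx, hy, hz, f1, f2, f3, _⟩ := TwoTriAux.sort3 hG' d1 d2 d3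
      have huniq := TwoTriAux.tri_unique hfree hcon hx hy hz px py pz
        ⟨hle f1, hle f2, hle f3⟩ ⟨e1, e2, e3⟩
      have hbad : G'.Adj x0 y0 := by
        rw [← huniq.1, ← huniq.2.1]
        exact f1
      rw [hG'def, SimpleGraph.deleteEdges_adj] at hbad
      exact hbad.2 rfl
    have hTwoTriAux.key := TwoTriAux.key hfree' htri' (n1 + n2 + n3) 0 1 2
      (TwoTriAux.P n1 n2 n3 0) (TwoTriAux.P n1 n2 n3 1) (TwoTriAux.P n1 n2 n3 2)
      (by decide) (by decide) (by decide) hmem0 hmem1 hmem2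
      (by rw [hc1, hc2]; exact h23) (by rw [hc0, hc2]; exact h23.trans h12)
      (by rw [hc0, hc1, hc2])
    have hdel := TwoTriAux.E3_delete (G := G) px py
    have hedge := TwoTriAux.edge_eq_E3 hG
    have hedge' := TwoTriAux.edge_eq_E3 hG'
    rw [hc0, hc1, hc2] at hTwoTriAux.key
    rw [hG'def] at hTwoTriAux.key hedge'
    omega
  · have htriG : ∀ u v w, G.Adj u v → G.Adj v w → G.Adj w u → False := by
      intro u v w d1 d2 d3
      obtain ⟨x, y, z, hx, hy, hz, f1, f2, f3, _⟩ := TwoTriAux.sort3 hG d1 d2 d3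
      exact htr ⟨x, y, z, hx, hy, hz, f1, f2, f3⟩
    have hTwoTriAux.key := TwoTriAux.key hfree htriG (n1 + n2 + n3) 0 1 2
      (TwoTriAux.P n1 n2 n3 0) (TwoTriAux.P n1 n2 n3 1) (TwoTriAux.P n1 n2 n3 2)
      (by decide) (by decide) (by decide) hmem0 hmem1 hmem2
      (by rw [hc1, hc2]; exact h23) (by rw [hc0, hc2]; exact h23.trans h12)
      (by rw [hc0, hc1, hc2])
    have hedge := TwoTriAux.edge_eq_E3 hG
    rw [hc0, hc1, hc2] at hTwoTriAux.key
    omega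
end
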